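/- arXiv:2510.12512 — 8 statements merged into one kernel-verified Lean document; each statement's English description precedes it below -/
import Mathlib

section
/- Let 0 < μ < L be reals and set κ = L/μ. Let n ≥ 1, let m ∈ ℝ[z] be a monic polynomial of degree n all of whose complex roots have modulus exactly 1, and let d ∈ ℝ[z] be a polynomial with deg d < n. Let ρ > 0 and suppose that for every λ ∈ [μ, L], every complex root of the polynomial m(z) − λ·d(z) has modulus at most ρ. Then ρ^n ≥ (κ − 1)/(κ + 1), i.e., ρ ≥ ((κ − 1)/(κ + 1))^{1/n}. -/
open Polynomial

lemma multiset_prod_le_pow (s : Multiset ℝ) (ρ : ℝ) (hρ : 0 ≤ ρ)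
    (h0 : ∀ x ∈ s, 0 ≤ x) (h : ∀ x ∈ s, x ≤ ρ) :
    s.prod ≤ ρ ^ Multiset.card s := by
  induction s using Multiset.induction with
  | empty => simp
  | cons a s ih =>
    simp only [Multiset.prod_cons, Multiset.card_cons, pow_succ']
    have h1 := ih (fun x hx => h0 x (Multiset.mem_cons_of_mem hx))
      (fun x hx => h x (Multiset.mem_cons_of_mem hx))
    have ha0 := h0 a (Multiset.mem_cons_self a s)
    have ha := h a (Multiset.mem_cons_self a s)
    have hs0 : 0 ≤ s.prod :=
      Multiset.prod_nonneg (fun x hx => h0 x (Multiset.mem_cons_of_mem hx))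
    nlinarith [pow_nonneg hρ (Multiset.card s)]

lemma abs_eval_zero_eq_prod (q : Polynomial ℂ) (hq : q.Monic) :
    ‖q.eval 0‖ = (q.roots.map (fun z => ‖z‖)).prod := by
  conv_lhs => rw [(IsAlgClosed.splits q).eq_prod_roots_of_monic hq]
  rw [eval_multiset_prod, ← normHom_apply, map_multiset_prod, Multiset.map_map, Multiset.map_map]
  congr 1
  apply Multiset.map_congr rfl
  intro x _
  simp

lemma abs_eval_zero_le (p : Polynomial ℝ) (hp : p.Monic) (ρ : ℝ) (hρ : 0 ≤ ρ)
    (h : ∀ z : ℂ, (p.map (algebraMap ℝ ℂ)).IsRoot z → ‖z‖ ≤ ρ) :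
    |p.eval 0| ≤ ρ ^ p.natDegree := by
  set q := p.map (algebraMap ℝ ℂ) with hqdef
  have hqm : q.Monic := hp.map _
  have hq0 : q ≠ 0 := hqm.ne_zero
  have h1 : |p.eval 0| = ‖q.eval 0‖ := by
    rw [hqdef, eval_map, eval₂_at_zero]
    simp [← coeff_zero_eq_eval_zero]
  rw [h1, abs_eval_zero_eq_prod q hqm]
  have hcard : Multiset.card (q.roots.map (fun z => ‖z‖)) = p.natDegree := by
    rw [Multiset.card_map, splits_iff_card_roots.mp (IsAlgClosed.splits q),
      hqdef, natDegree_map]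
  rw [← hcard]
  apply multiset_prod_le_pow _ _ hρ
  · intro x hx
    obtain ⟨z, hz, rfl⟩ := Multiset.mem_map.mp hx
    exact norm_nonneg z
  · intro x hx
    obtain ⟨z, hz, rfl⟩ := Multiset.mem_map.mp hx
    exact h z ((mem_roots hq0).mp hz)

lemma abs_eval_zero_eq_one (p : Polynomial ℝ) (hp : p.Monic)
    (h : ∀ z : ℂ, (p.map (algebraMap ℝ ℂ)).IsRoot z → ‖z‖ = 1) :
    |p.eval 0| = 1 := by
  set q := p.map (algebraMap ℝ ℂ) with hqdef
  have hqm : q.Monic := hp.map _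
  have hq0 : q ≠ 0 := hqm.ne_zero
  have h1 : |p.eval 0| = ‖q.eval 0‖ := by
    rw [hqdef, eval_map, eval₂_at_zero]
    simp [← coeff_zero_eq_eval_zero]
  rw [h1, abs_eval_zero_eq_prod q hqm]
  apply Multiset.prod_eq_one
  intro x hx
  obtain ⟨z, hz, rfl⟩ := Multiset.mem_map.mp hx
  exact h z ((mem_roots hq0).mp hz)

/-- **Theorem 1 (fundamental lower bound on the worst-case convergence rate).**
Let `0 < μ < L`, `κ = L/μ`. Let `m` be a monic real polynomial of degree `n ≥ 1`
all of whose complex roots have modulus exactly `1`, and `d` a real polynomial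
with `deg d < n`. If `ρ > 0` is such that for every `λ ∈ [μ, L]` every complex
root of `m - λ·d` has modulus at most `ρ`, then `ρ^n ≥ (κ-1)/(κ+1)`, i.e.
`ρ ≥ ((κ-1)/(κ+1))^(1/n)`. -/
theorem worst_case_rate_lower_bound
    (μ L : ℝ) (hμ : 0 < μ) (hμL : μ < L)
    (n : ℕ) (hn : 1 ≤ n)
    (m : Polynomial ℝ) (hm : m.Monic) (hmdeg : m.natDegree = n)
    (hmroots : ∀ z : ℂ, (m.map (algebraMap ℝ ℂ)).IsRoot z → ‖z‖ = 1)
    (d : Polynomial ℝ) (hd : d.degree < (n : WithBot ℕ))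
    (ρ : ℝ) (hρ : 0 < ρ)
    (hstab : ∀ lam ∈ Set.Icc μ L, ∀ z : ℂ,
      ((m - C lam * d).map (algebraMap ℝ ℂ)).IsRoot z → ‖z‖ ≤ ρ) :
    (L / μ - 1) / (L / μ + 1) ≤ ρ ^ n ∧
      ((L / μ - 1) / (L / μ + 1)) ^ ((1 : ℝ) / n) ≤ ρ := by
  have hmdeg' : m.degree = (n : WithBot ℕ) := by
    rw [degree_eq_natDegree hm.ne_zero, hmdeg]
  have key : ∀ lam ∈ Set.Icc μ L, |m.eval 0 - lam * d.eval 0| ≤ ρ ^ n := by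
    intro lam hlam
    have hdeglt : (C lam * d).degree < m.degree := by
      rw [hmdeg', ← smul_eq_C_mul]
      exact lt_of_le_of_lt (degree_smul_le _ _) hd
    have hmon : (m - C lam * d).Monic := hm.sub_of_left hdeglt
    have hdeq : (m - C lam * d).degree = (n : WithBot ℕ) := by
      rw [degree_sub_eq_left_of_degree_lt hdeglt, hmdeg']
    have hnd : (m - C lam * d).natDegree = n := natDegree_eq_of_degree_eq_some hdeq
    have := abs_eval_zero_le (m - C lam * d) hmon ρ hρ.le (hstab lam hlam)
    rwa [hnd, eval_sub, eval_mul, eval_C] at this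
  have hone : |m.eval 0| = 1 := abs_eval_zero_eq_one m hm hmroots
  have h1 := key μ ⟨le_refl _, hμL.le⟩
  have h2 := key L ⟨hμL.le, le_refl _⟩
  set a := m.eval 0
  set b := d.eval 0
  have hcomb : L - μ ≤ (L + μ) * ρ ^ n := by
    have hthis : (L - μ) * |a| ≤ L * |a - μ * b| + μ * |a - L * b| := by
      have habs : |L * (a - μ * b) - μ * (a - L * b)| = (L - μ) * |a| := by
        have h' : L * (a - μ * b) - μ * (a - L * b) = (L - μ) * a := by ring
        rw [h', abs_mul, abs_of_pos (by linarith : (0:ℝ) < L - μ)]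
      calc (L - μ) * |a| = |L * (a - μ * b) - μ * (a - L * b)| := habs.symm
        _ ≤ |L * (a - μ * b)| + |μ * (a - L * b)| := abs_sub _ _
        _ = L * |a - μ * b| + μ * |a - L * b| := by
            rw [abs_mul, abs_mul, abs_of_pos (by linarith : (0:ℝ) < L), abs_of_pos hμ]
    rw [hone, mul_one] at hthis
    nlinarith [h1, h2, hμ.le, hμL.le]
  have hLpos : (0:ℝ) < L := lt_trans hμ hμL
  have hfrac : (L / μ - 1) / (L / μ + 1) = (L - μ) / (L + μ) := by
    rw [div_eq_div_iff (by positivity) (by linarith)]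
    field_simp
  have hLμ : (0:ℝ) < L + μ := by linarith
  have hρn : (L / μ - 1) / (L / μ + 1) ≤ ρ ^ n := by
    rw [hfrac, div_le_iff₀ hLμ]
    linarith [hcomb]
  refine ⟨hρn, ?_⟩
  have hc0 : (0:ℝ) ≤ (L / μ - 1) / (L / μ + 1) := by
    apply div_nonneg
    · have : 1 < L / μ := (one_lt_div hμ).mpr hμL
      linarith
    · have : 0 < L / μ := div_pos (by linarith) hμ
      linarith
  have hn0 : (n:ℝ) ≠ 0 := Nat.cast_ne_zero.mpr (by omega)
  calc ((L / μ - 1) / (L / μ + 1)) ^ ((1:ℝ)/n)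
      ≤ (ρ ^ n) ^ ((1:ℝ)/n) := Real.rpow_le_rpow hc0 hρn (by positivity)
    _ = ρ := by
        rw [← Real.rpow_natCast ρ n, ← Real.rpow_mul hρ.le, mul_one_div,
          div_self hn0, Real.rpow_one]
end

section
/- Let 0 < μ < L be reals and set κ = L/μ. Let n ≥ 1, let m ∈ ℝ[z] be a monic polynomial of degree n (no condition on its roots), and let d ∈ ℝ[z] be a polynomial with deg d < n. Let ρ > 0 and suppose that for every λ ∈ [μ, L], every complex root of m(z) − λ·d(z) has modulus at most ρ. Then for every k ∈ {1, …, n}, the coefficient m_{n−k} of z^{n−k} in m satisfies |m_{n−k}| · (κ − 1)/(κ + 1) ≤ binom(n, k) · ρ^k. -/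
open Polynomial

lemma abs_prod_le (ρ : ℝ) (hρ : 0 ≤ ρ) :
    ∀ (A : Multiset ℂ), (∀ z ∈ A, ‖z‖ ≤ ρ) → ‖A.prod‖ ≤ ρ ^ Multiset.card A := by
  intro A
  induction A using Multiset.induction with
  | empty => simp
  | cons a A ih =>
    intro h
    simp only [Multiset.prod_cons, norm_mul, Multiset.card_cons, pow_succ']
    exact mul_le_mul (h a (Multiset.mem_cons_self a A)) (ih fun z hz => h z (Multiset.mem_cons_of_mem hz))
      (norm_nonneg _) hρ

lemma esymm_abs_le (s : Multiset ℂ) (ρ : ℝ) (hρ : 0 ≤ ρ) (k : ℕ)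
    (h : ∀ z ∈ s, ‖z‖ ≤ ρ) :
    ‖s.esymm k‖ ≤ ((Multiset.card s).choose k : ℝ) * ρ ^ k := by
  unfold Multiset.esymm
  calc ‖((s.powersetCard k).map Multiset.prod).sum‖
      ≤ ((((s.powersetCard k).map Multiset.prod)).map (‖·‖)).sum := by
        simpa using norm_multiset_sum_le ((s.powersetCard k).map Multiset.prod)
    _ ≤ Multiset.card (((s.powersetCard k).map Multiset.prod).map (‖·‖)) • (ρ ^ k) := by
        apply Multiset.sum_le_card_nsmul
        intro x hx
        simp only [Multiset.mem_map] at hx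
        obtain ⟨y, ⟨A, hA, rfl⟩, rfl⟩ := hx
        obtain ⟨hle, hcard⟩ := Multiset.mem_powersetCard.mp hA
        rw [← hcard]
        exact abs_prod_le ρ hρ A fun z hz => h z (Multiset.mem_of_le hle hz)
    _ = ((Multiset.card s).choose k : ℝ) * ρ ^ k := by
        simp [Multiset.card_powersetCard, nsmul_eq_mul]

lemma coeff_bound (n : ℕ) (ρ : ℝ) (hρ : 0 ≤ ρ) (p : Polynomial ℂ) (hp : p.Monic)
    (hdeg : p.natDegree = n) (hroots : ∀ z, p.IsRoot z → ‖z‖ ≤ ρ)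
    (k : ℕ) (hk : k ≤ n) :
    ‖p.coeff (n - k)‖ ≤ (n.choose k : ℝ) * ρ ^ k := by
  have hcard : Multiset.card p.roots = p.natDegree :=
    splits_iff_card_roots.mp (IsAlgClosed.splits p)
  have h1 : n - k ≤ p.natDegree := by omega
  rw [coeff_eq_esymm_roots_of_card hcard h1, hdeg]
  have h2 : n - (n - k) = k := by omega
  rw [h2, norm_mul, norm_mul, hp.leadingCoeff]
  simp only [norm_one, one_mul, norm_pow, norm_neg, norm_one, one_pow]
  have := esymm_abs_le p.roots ρ hρ k (fun z hz => hroots z (isRoot_of_mem_roots hz))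
  rwa [hcard, hdeg] at this

/-- **Generalized coefficient bound (eq. bound-general).**
Let `0 < μ < L`, `κ = L/μ`. Let `m` be a monic real polynomial of degree `n ≥ 1`
(no condition on its roots) and `d` a real polynomial with `deg d < n`. If every
complex root of `m - λ·d` has modulus at most `ρ` for all `λ ∈ [μ, L]`, then for
every `k ∈ {1, …, n}` the coefficient of `z^(n-k)` in `m` satisfies
`|m_{n-k}| · (κ-1)/(κ+1) ≤ binom(n,k) · ρ^k`. -/
theorem model_coefficient_bound
    (μ L : ℝ) (hμ : 0 < μ) (hμL : μ < L)
    (n : ℕ) (hn : 1 ≤ n)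
    (m : Polynomial ℝ) (hm : m.Monic) (hmdeg : m.natDegree = n)
    (d : Polynomial ℝ) (hd : d.degree < (n : WithBot ℕ))
    (ρ : ℝ) (hρ : 0 < ρ)
    (hstab : ∀ lam ∈ Set.Icc μ L, ∀ z : ℂ,
      ((m - C lam * d).map (algebraMap ℝ ℂ)).IsRoot z → ‖z‖ ≤ ρ) :
    ∀ k, 1 ≤ k → k ≤ n →
      |m.coeff (n - k)| * ((L / μ - 1) / (L / μ + 1)) ≤ (n.choose k : ℝ) * ρ ^ k := by
  intro k hk1 hkn
  -- properties of p_lam for lam ∈ {μ, L}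
  have key : ∀ lam ∈ Set.Icc μ L,
      ‖(((m - C lam * d).map (algebraMap ℝ ℂ)).coeff (n - k))‖ ≤ (n.choose k : ℝ) * ρ ^ k := by
    intro lam hlam
    have hdegm : m.degree = (n : WithBot ℕ) := by
      rw [degree_eq_natDegree hm.ne_zero, hmdeg]
    have hdlt : (C lam * d).degree < m.degree := by
      rw [hdegm]
      refine lt_of_le_of_lt ?_ hd
      simpa using (degree_mul_le (C lam) d).trans (add_le_add degree_C_le le_rfl)
    have hmon : (m - C lam * d).Monic := by
      have := hm.add_of_left (q := -(C lam * d)) (by rwa [degree_neg])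
      simpa [sub_eq_add_neg] using this
    have hdeg2 : (m - C lam * d).natDegree = n := by
      have : (m - C lam * d).degree = m.degree := by
        rw [sub_eq_add_neg]
        exact degree_add_eq_left_of_degree_lt (by rwa [degree_neg])
      have := this.trans hdegm
      exact natDegree_eq_of_degree_eq_some this
    refine coeff_bound n ρ hρ.le _ (hmon.map _) ?_ (hstab lam hlam) k hkn
    rw [natDegree_map]; exact hdeg2
  have hμm := key μ ⟨le_refl _, hμL.le⟩
  have hLm := key L ⟨hμL.le, le_refl _⟩
  have hc : ∀ lam : ℝ, ((m - C lam * d).map (algebraMap ℝ ℂ)).coeff (n - k)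
      = ((m.coeff (n - k) - lam * d.coeff (n - k) : ℝ) : ℂ) := by
    intro lam
    simp [coeff_map, coeff_sub, coeff_C_mul]
  rw [hc, Complex.norm_real, Real.norm_eq_abs] at hμm hLm
  -- (L - μ) * m.coeff = L * (m - μ d).coeff - μ * (m - L d).coeff
  have hLμ : 0 < L - μ := by linarith
  have hLμ2 : 0 < L + μ := by linarith
  set a := m.coeff (n - k)
  set b := d.coeff (n - k)
  have hid : (L - μ) * a = L * (a - μ * b) - μ * (a - L * b) := by ring
  have habs : (L - μ) * |a| ≤ (L + μ) * ((n.choose k : ℝ) * ρ ^ k) := by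
    calc (L - μ) * |a| = |(L - μ) * a| := by
          rw [abs_mul, abs_of_pos hLμ]
      _ = |L * (a - μ * b) - μ * (a - L * b)| := by rw [hid]
      _ ≤ |L * (a - μ * b)| + |μ * (a - L * b)| := abs_sub _ _
      _ = L * |a - μ * b| + μ * |a - L * b| := by
          rw [abs_mul, abs_mul, abs_of_pos (by linarith), abs_of_pos hμ]
      _ ≤ L * ((n.choose k : ℝ) * ρ ^ k) + μ * ((n.choose k : ℝ) * ρ ^ k) := by
          gcongr <;> linarith
      _ = (L + μ) * ((n.choose k : ℝ) * ρ ^ k) := by ring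
  have hLμ3 : 0 < L / μ + 1 := by
    have : 0 < L / μ := div_pos (by linarith) hμ
    linarith
  have hfrac : (L / μ - 1) / (L / μ + 1) = (L - μ) / (L + μ) := by
    rw [div_eq_div_iff hLμ3.ne' hLμ2.ne']
    field_simp
  rw [hfrac]
  rw [div_eq_mul_inv, ← mul_assoc, mul_comm |a| (L - μ)]
  rw [mul_inv_le_iff₀ hLμ2]
  linarith [habs]
end

section
/- Let 0 < μ < L be reals. Let n ≥ 1, let m ∈ ℝ[z] be a monic polynomial of degree n, and let d ∈ ℝ[z] be a polynomial with deg d < n. Let ρ > 0 and suppose that for every λ ∈ [μ, L], every complex root of m(z) − λ·d(z) has modulus at most ρ. Then for every k ∈ {1, …, n}, the coefficient d_{n−k} of z^{n−k} in d satisfies (L − μ) · |d_{n−k}| ≤ 2 · binom(n, k) · ρ^k. -/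
open Polynomial

lemma aux_coeff_bound (μ L : ℝ) (n : ℕ)
    (m : Polynomial ℝ) (hm : m.Monic) (hmdeg : m.natDegree = n)
    (d : Polynomial ℝ) (hd : d.degree < (n : WithBot ℕ))
    (ρ : ℝ)
    (lam : ℝ) (hlam : lam ∈ Set.Icc μ L)
    (hstab : ∀ lam ∈ Set.Icc μ L, ∀ z : ℂ,
      ((m - C lam * d).map (algebraMap ℝ ℂ)).IsRoot z → ‖z‖ ≤ ρ)
    (k : ℕ) (hk1 : 1 ≤ k) (hkn : k ≤ n) :
    |(m - C lam * d).coeff (n - k)| ≤ ρ ^ k * (n.choose k : ℝ) := by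
  set p : Polynomial ℝ := m - C lam * d with hp
  have hmdeg' : m.degree = (n : WithBot ℕ) := by
    rw [← hmdeg]; exact degree_eq_natDegree hm.ne_zero
  have hqlt : (C lam * d).degree < m.degree := by
    rw [hmdeg']
    exact lt_of_le_of_lt (degree_mul_le _ _)
      (by
        rcases le_or_gt (C lam : Polynomial ℝ).degree 0 with h | h
        · exact lt_of_le_of_lt (add_le_of_nonpos_left h) hd
        · exact absurd (degree_C_le) (not_le.mpr h))
  have hpmonic : p.Monic := hm.sub_of_left hqlt
  have hpdeg : p.natDegree = n := by
    rw [← hmdeg]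
    exact natDegree_eq_of_degree_eq (degree_sub_eq_left_of_degree_lt hqlt)
  have hsplits : Splits (p.map (algebraMap ℝ ℂ)) := IsAlgClosed.splits _
  have hroots : ∀ z ∈ (p.map (algebraMap ℝ ℂ)).roots, ‖z‖ ≤ ρ := by
    intro z hz
    have := hstab lam hlam z (isRoot_of_mem_roots hz)
    simpa using this
  have := Polynomial.coeff_le_of_roots_le (n - k) hpmonic hsplits hroots
  rw [hpdeg] at this
  have hnk : n - (n - k) = k := Nat.sub_sub_self hkn
  rw [hnk] at this
  have hcoeff : ((p.map (algebraMap ℝ ℂ)).coeff (n - k)) = ((p.coeff (n - k) : ℝ) : ℂ) := by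
    simp [coeff_map]
  rw [hcoeff, Complex.norm_real, Nat.choose_symm hkn] at this
  simpa using this

/-- **Bound on the filter-numerator coefficients.**
Let `0 < μ < L`. Let `m` be a monic real polynomial of degree `n ≥ 1` and `d` a
real polynomial with `deg d < n`. If every complex root of `m - λ·d` has modulus
at most `ρ` for all `λ ∈ [μ, L]`, then for every `k ∈ {1, …, n}` the coefficient
of `z^(n-k)` in `d` satisfies `(L-μ)·|d_{n-k}| ≤ 2·binom(n,k)·ρ^k`. -/
theorem filter_coefficient_bound
    (μ L : ℝ) (hμ : 0 < μ) (hμL : μ < L)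
    (n : ℕ) (hn : 1 ≤ n)
    (m : Polynomial ℝ) (hm : m.Monic) (hmdeg : m.natDegree = n)
    (d : Polynomial ℝ) (hd : d.degree < (n : WithBot ℕ))
    (ρ : ℝ) (hρ : 0 < ρ)
    (hstab : ∀ lam ∈ Set.Icc μ L, ∀ z : ℂ,
      ((m - C lam * d).map (algebraMap ℝ ℂ)).IsRoot z → ‖z‖ ≤ ρ) :
    ∀ k, 1 ≤ k → k ≤ n →
      (L - μ) * |d.coeff (n - k)| ≤ 2 * (n.choose k : ℝ) * ρ ^ k := by
  intro k hk1 hkn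
  have hμmem : μ ∈ Set.Icc μ L := ⟨le_refl _, le_of_lt hμL⟩
  have hLmem : L ∈ Set.Icc μ L := ⟨le_of_lt hμL, le_refl _⟩
  have h1 := aux_coeff_bound μ L n m hm hmdeg d hd ρ μ hμmem hstab k hk1 hkn
  have h2 := aux_coeff_bound μ L n m hm hmdeg d hd ρ L hLmem hstab k hk1 hkn
  have key : (L - μ) * d.coeff (n - k)
      = (m - C μ * d).coeff (n - k) - (m - C L * d).coeff (n - k) := by
    simp [coeff_sub, coeff_C_mul]
    ring
  have : (L - μ) * |d.coeff (n - k)| = |(L - μ) * d.coeff (n - k)| := by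
    rw [abs_mul, abs_of_pos (sub_pos.mpr hμL)]
  rw [this, key]
  calc |(m - C μ * d).coeff (n - k) - (m - C L * d).coeff (n - k)|
      ≤ |(m - C μ * d).coeff (n - k)| + |(m - C L * d).coeff (n - k)| := abs_sub _ _
    _ ≤ ρ ^ k * (n.choose k : ℝ) + ρ ^ k * (n.choose k : ℝ) := add_le_add h1 h2
    _ = 2 * (n.choose k : ℝ) * ρ ^ k := by ring
end

section
/- Let 0 < μ < L be reals and let λ ∈ [μ, L]. Let n ≥ 1, let m ∈ ℝ[z] be a monic polynomial of degree n with coefficients m_0, …, m_{n−1} (and m_n = 1), and let d ∈ ℝ[z] be a polynomial of degree < n with coefficients d_0, …, d_{n−1}. Let b, x : ℕ → ℝ be sequences such that for all k ∈ ℕ: (i) b_{k+n} + Σ_{i=0}^{n−1} m_i b_{k+i} = 0, and (ii) x_{k+n} + Σ_{i=0}^{n−1} m_i x_{k+i} = Σ_{i=0}^{n−1} d_i (λ x_{k+i} + b_{k+i}). Let ρ ∈ (0, 1) be such that every complex root of m(z) − λ·d(z) has modulus at most ρ. Then for every real r > ρ, the sequence (x_k + b_k/λ)/r^k converges to 0;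 in particular x_k − x*_k → 0, where x*_k = −b_k/λ is the minimizer of the scalar objective f_k(x) = ½λx² + b_k x. -/
open Polynomial Filter


lemma contract_aux (c : ℂ) (hc : ‖c‖ < 1) (z e : ℕ → ℂ)
    (hz : ∀ k, z (k + 1) = c * z k + e k) (he : Tendsto e atTop (nhds 0)) :
    Tendsto z atTop (nhds 0) := by
  set a := ‖c‖ with ha
  have ha0 : 0 ≤ a := norm_nonneg c
  have h1a : 0 < 1 - a := by linarith
  rw [Metric.tendsto_atTop] at he ⊢
  intro ε hε
  have hδ : 0 < ε * (1 - a) / 4 := by positivity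
  obtain ⟨K, hK⟩ := he _ hδ
  set δ := ε * (1 - a) / 4 with hδdef
  have key : ∀ j, ‖z (K + j)‖ ≤ a ^ j * ‖z K‖ + δ / (1 - a) := by
    intro j
    induction j with
    | zero => simp; positivity
    | succ j ih =>
      have hKj : ‖e (K + j)‖ < δ := by
        have := hK (K + j) (Nat.le_add_right K j)
        rwa [dist_zero_right] at this
      have : z (K + (j + 1)) = c * z (K + j) + e (K + j) := by
        rw [← hz (K + j)]; ring_nf
      calc ‖z (K + (j + 1))‖ ≤ a * ‖z (K + j)‖ + ‖e (K + j)‖ := by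
            rw [this]
            refine (norm_add_le _ _).trans ?_
            gcongr
            rw [norm_mul]
        _ ≤ a * (a ^ j * ‖z K‖ + δ / (1 - a)) + δ := by
            have := hKj.le
            nlinarith [ih, norm_nonneg (e (K+j)), norm_nonneg (z (K+j)), ha0]
        _ ≤ a ^ (j + 1) * ‖z K‖ + δ / (1 - a) := by
            rw [pow_succ]
            have hdd : a * (δ / (1 - a)) + δ ≤ δ / (1 - a) := by
              rw [le_div_iff₀ h1a]
              have he2 : (a * (δ / (1 - a)) + δ) * (1 - a)
                  = a * δ * ((1 - a) / (1 - a)) + δ * (1 - a) := by ring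
              rw [he2, div_self (ne_of_gt h1a)]
              nlinarith
            nlinarith [hdd]
  -- a^j * ‖z K‖ → 0
  have hpow : Tendsto (fun j : ℕ => a ^ j * ‖z K‖) atTop (nhds 0) := by
    simpa using (tendsto_pow_atTop_nhds_zero_of_lt_one ha0 hc).mul_const ‖z K‖
  rw [Metric.tendsto_atTop] at hpow
  obtain ⟨J, hJ⟩ := hpow (ε / 2) (by linarith)
  refine ⟨K + J, fun k hk => ?_⟩
  have hkK : K ≤ k := le_trans (Nat.le_add_right K J) hk
  obtain ⟨j, rfl⟩ := Nat.exists_eq_add_of_le hkK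
  have hjJ : J ≤ j := by omega
  have h1 : a ^ j * ‖z K‖ ≤ a ^ J * ‖z K‖ :=
    mul_le_mul_of_nonneg_right (pow_le_pow_of_le_one ha0 hc.le hjJ) (norm_nonneg _)
  have h2 : a ^ J * ‖z K‖ < ε / 2 := by
    have := hJ J le_rfl
    rwa [dist_zero_right, Real.norm_eq_abs, abs_of_nonneg (by positivity)] at this
  have h3 : δ / (1 - a) ≤ ε / 4 := by
    rw [hδdef, div_le_iff₀ h1a]
    nlinarith
  have := key j
  rw [dist_zero_right]
  linarith

lemma key_aux (ρ : ℝ) (hρ0 : 0 < ρ) :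
    ∀ (N : ℕ) (q : Polynomial ℂ), q.Monic → q.natDegree = N →
    (∀ zr ∈ q.roots, ‖zr‖ ≤ ρ) →
    ∀ y : ℕ → ℂ, (∀ k, ∑ i ∈ Finset.range (N + 1), q.coeff i * y (k + i) = 0) →
    ∀ r : ℝ, ρ < r → Tendsto (fun k => y k / (r : ℂ) ^ k) atTop (nhds 0) := by
  intro N
  induction N with
  | zero =>
    intro q hq hqdeg _ y hy r hr
    have hq1 : q = 1 := hq.natDegree_eq_zero.mp hqdeg
    have hy0 : ∀ k, y k = 0 := by
      intro k
      have := hy k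
      simpa [hq1] using this
    simpa [hy0] using (tendsto_const_nhds : Tendsto (fun _ : ℕ => (0 : ℂ)) atTop (nhds 0))
  | succ N ih =>
    intro q hq hqdeg hqroots y hy r hr
    have hr0 : 0 < r := lt_trans hρ0 hr
    have hq0 : q ≠ 0 := hq.ne_zero
    obtain ⟨α, hα⟩ := Complex.exists_root
      (f := q) (natDegree_pos_iff_degree_pos.mp (by omega : 0 < q.natDegree))
    have hαρ : ‖α‖ ≤ ρ := hqroots α ((mem_roots hq0).mpr hα)
    set q' := q /ₘ (X - C α) with hq'def
    have hfac : (X - C α) * q' = q := mul_divByMonic_eq_iff_isRoot.mpr hα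
    have hq' : q'.Monic := (monic_X_sub_C α).of_mul_monic_left (by rw [hfac]; exact hq)
    have hq'deg : q'.natDegree = N := by
      have h := natDegree_mul (X_sub_C_ne_zero α) hq'.ne_zero
      rw [hfac, natDegree_X_sub_C, hqdeg] at h
      omega
    have hq'roots : ∀ zr ∈ q'.roots, ‖zr‖ ≤ ρ := by
      intro zr hzr
      refine hqroots zr ?_
      rw [← hfac, roots_mul (by rw [hfac]; exact hq0)]
      exact Multiset.mem_add.mpr (Or.inr hzr)
    set w : ℕ → ℂ := fun k => y (k + 1) - α * y k with hwdef
    have hw : ∀ k, ∑ i ∈ Finset.range (N + 1), q'.coeff i * w (k + i) = 0 := by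
      intro k
      have h0 := hy k
      rw [← hfac] at h0
      have hexp : ∑ j ∈ Finset.range (N + 2), ((X - C α) * q').coeff j * y (k + j)
          = (∑ i ∈ Finset.range (N + 1), q'.coeff i * y (k + (i + 1)))
            - α * ∑ i ∈ Finset.range (N + 1), q'.coeff i * y (k + i) := by
        have h1 : ∀ j ∈ Finset.range (N + 2), ((X - C α) * q').coeff j * y (k + j)
            = (X * q').coeff j * y (k + j) - α * (q'.coeff j * y (k + j)) := by
          intro j _
          rw [sub_mul, coeff_sub, coeff_C_mul]
          ring
        rw [Finset.sum_congr rfl h1, Finset.sum_sub_distrib, ← Finset.mul_sum]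
        congr 1
        · rw [Finset.sum_range_succ']
          simp [coeff_X_mul, mul_coeff_zero]
        · rw [Finset.sum_range_succ,
            coeff_eq_zero_of_natDegree_lt (by omega : q'.natDegree < N + 1)]
          simp
      calc ∑ i ∈ Finset.range (N + 1), q'.coeff i * w (k + i)
          = (∑ i ∈ Finset.range (N + 1), q'.coeff i * y (k + (i + 1)))
            - α * ∑ i ∈ Finset.range (N + 1), q'.coeff i * y (k + i) := by
            rw [Finset.mul_sum, ← Finset.sum_sub_distrib]
            refine Finset.sum_congr rfl fun i _ => ?_
            show q'.coeff i * (y (k + i + 1) - α * y (k + i)) = _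
            have : k + (i + 1) = k + i + 1 := rfl
            rw [this]
            ring
        _ = 0 := by rw [← hexp]; exact h0
    have hwlim := ih q' hq' hq'deg hq'roots w hw r hr
    have hrC : (r : ℂ) ≠ 0 := by
      exact_mod_cast ne_of_gt hr0
    have hc : ‖α / (r : ℂ)‖ < 1 := by
      rw [norm_div, Complex.norm_of_nonneg hr0.le, div_lt_one hr0]
      exact lt_of_le_of_lt hαρ hr
    have hz : ∀ k, y (k + 1) / (r : ℂ) ^ (k + 1)
        = (α / (r : ℂ)) * (y k / (r : ℂ) ^ k) + w k / (r : ℂ) ^ (k + 1) := by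
      intro k
      field_simp [hwdef]
      ring
    have he : Tendsto (fun k => w k / (r : ℂ) ^ (k + 1)) atTop (nhds 0) := by
      have := hwlim.div_const (r : ℂ)
      simpa [div_div, pow_succ] using this
    exact contract_aux (α / (r : ℂ)) hc (fun k => y k / (r : ℂ) ^ k)
      (fun k => w k / (r : ℂ) ^ (k + 1)) hz he

/-- **Scalar (eigenvector-coordinate) tracking lemma.**
Let `0 < μ < L`, `λ ∈ [μ, L]`, `m` a monic real polynomial of degree `n ≥ 1`,
`d` a real polynomial of degree `< n`. Suppose `b` satisfies the model
recurrence `b_{k+n} + Σ m_i b_{k+i} = 0` and `x` satisfies the algorithm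
recurrence `x_{k+n} + Σ m_i x_{k+i} = Σ d_i (λ x_{k+i} + b_{k+i})`. If
`ρ ∈ (0,1)` is such that every complex root of `m - λ·d` has modulus at most
`ρ`, then `(x_k + b_k/λ)/r^k → 0` for every `r > ρ`; in particular
`x_k - x*_k → 0` with `x*_k = -b_k/λ`. -/
theorem scalar_tracking
    (μ L : ℝ) (hμ : 0 < μ) (hμL : μ < L)
    (lam : ℝ) (hlam : lam ∈ Set.Icc μ L)
    (n : ℕ) (hn : 1 ≤ n)
    (m : Polynomial ℝ) (hm : m.Monic) (hmdeg : m.natDegree = n)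
    (d : Polynomial ℝ) (hd : d.degree < (n : WithBot ℕ))
    (b x : ℕ → ℝ)
    (hb : ∀ k : ℕ, b (k + n) + ∑ i ∈ Finset.range n, m.coeff i * b (k + i) = 0)
    (hx : ∀ k : ℕ, x (k + n) + ∑ i ∈ Finset.range n, m.coeff i * x (k + i) =
      ∑ i ∈ Finset.range n, d.coeff i * (lam * x (k + i) + b (k + i)))
    (ρ : ℝ) (hρ : ρ ∈ Set.Ioo (0 : ℝ) 1)
    (hroots : ∀ z : ℂ, ((m - C lam * d).map (algebraMap ℝ ℂ)).IsRoot z →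
      ‖z‖ ≤ ρ) :
    (∀ r : ℝ, ρ < r →
      Tendsto (fun k : ℕ => (x k + b k / lam) / r ^ k) atTop (nhds 0)) ∧
    Tendsto (fun k : ℕ => x k - (-(b k) / lam)) atTop (nhds 0) := by
  obtain ⟨hρ0, hρ1⟩ := hρ
  have hlam0 : 0 < lam := lt_of_lt_of_le hμ hlam.1
  have hlamne : lam ≠ 0 := ne_of_gt hlam0
  set p : Polynomial ℝ := m - C lam * d with hpdef
  have hmdegree : m.degree = (n : WithBot ℕ) := by
    rw [degree_eq_natDegree hm.ne_zero, hmdeg]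
  have hCd : (C lam * d).degree < m.degree := by
    rw [hmdegree]
    calc (C lam * d).degree ≤ (C lam).degree + d.degree := degree_mul_le _ _
      _ ≤ 0 + d.degree := add_le_add degree_C_le le_rfl
      _ = d.degree := zero_add _
      _ < (n : WithBot ℕ) := hd
  have hp : p.Monic := hm.sub_of_left hCd
  have hpdeg : p.natDegree = n := by
    have := degree_sub_eq_left_of_degree_lt hCd
    rw [hmdegree] at this
    exact natDegree_eq_of_degree_eq_some this
  set q : Polynomial ℂ := p.map (algebraMap ℝ ℂ) with hqdef
  have hqmonic : q.Monic := hp.map _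
  have hqdeg : q.natDegree = n := by rw [hqdef, natDegree_map, hpdeg]
  have hqroots : ∀ zr ∈ q.roots, ‖zr‖ ≤ ρ := fun zr hzr =>
    hroots zr (isRoot_of_mem_roots hzr)
  -- real recurrence for y = x + b/lam
  have hpcoeff : ∀ i, p.coeff i = m.coeff i - lam * d.coeff i := by
    intro i
    rw [hpdef, coeff_sub, coeff_C_mul]
  have hpn : p.coeff n = 1 := by
    have := hp.coeff_natDegree
    rwa [hpdeg] at this
  have hrec : ∀ k, ∑ i ∈ Finset.range (n + 1),
      p.coeff i * (x (k + i) + b (k + i) / lam) = 0 := by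
    intro k
    rw [Finset.sum_range_succ, hpn]
    have hsplit : ∑ i ∈ Finset.range n, p.coeff i * (x (k + i) + b (k + i) / lam)
        = (∑ i ∈ Finset.range n, m.coeff i * x (k + i))
          + (∑ i ∈ Finset.range n, m.coeff i * b (k + i)) / lam
          - ∑ i ∈ Finset.range n, d.coeff i * (lam * x (k + i) + b (k + i)) := by
      rw [Finset.sum_div, ← Finset.sum_add_distrib, ← Finset.sum_sub_distrib]
      refine Finset.sum_congr rfl fun i _ => ?_
      rw [hpcoeff i]
      field_simp
    rw [hsplit]
    linear_combination hx k + hb k / lam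
  have hrecC : ∀ k, ∑ i ∈ Finset.range (n + 1),
      q.coeff i * ((x (k + i) + b (k + i) / lam : ℝ) : ℂ) = 0 := by
    intro k
    have h := hrec k
    calc ∑ i ∈ Finset.range (n + 1), q.coeff i * ((x (k + i) + b (k + i) / lam : ℝ) : ℂ)
        = ((∑ i ∈ Finset.range (n + 1),
            p.coeff i * (x (k + i) + b (k + i) / lam) : ℝ) : ℂ) := by
          push_cast [hqdef, coeff_map]
          rfl
      _ = 0 := by rw [h]; norm_cast
  have hmain : ∀ r : ℝ, ρ < r →
      Tendsto (fun k : ℕ => (x k + b k / lam) / r ^ k) atTop (nhds 0) := by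
    intro r hr
    have hkey := key_aux ρ hρ0 n q hqmonic hqdeg hqroots
      (fun k => ((x k + b k / lam : ℝ) : ℂ)) hrecC r hr
    have hC : Tendsto (fun k : ℕ => (((x k + b k / lam) / r ^ k : ℝ) : ℂ)) atTop
        (nhds ((0 : ℝ) : ℂ)) := by
      simpa [Complex.ofReal_div, Complex.ofReal_pow] using hkey
    exact tendsto_ofReal_iff.mp hC
  refine ⟨hmain, ?_⟩
  have hrρ : ρ < (ρ + 1) / 2 := by linarith
  have hr0v : (0 : ℝ) < (ρ + 1) / 2 := by linarith
  have hr1 : (ρ + 1) / 2 < 1 := by linarith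
  have h1 := hmain ((ρ + 1) / 2) hrρ
  have h2 : Tendsto (fun k : ℕ => ((ρ + 1) / 2) ^ k) atTop (nhds 0) :=
    tendsto_pow_atTop_nhds_zero_of_lt_one (le_of_lt hr0v) hr1
  have h3 := h1.mul h2
  rw [zero_mul] at h3
  refine h3.congr fun k => ?_
  rw [div_mul_cancel₀ _ (pow_ne_zero k (ne_of_gt hr0v))]
  ring
end

section
/- Let A be a d×d real symmetric matrix all of whose eigenvalues lie in [μ, L] with 0 < μ < L (so A is invertible). Let n ≥ 1, let m ∈ ℝ[z] be a monic polynomial of degree n with coefficients m_0, …, m_{n−1}, and let d ∈ ℝ[z] be a polynomial of degree < n with coefficients d_0, …, d_{n−1}. Let b, x : ℕ → ℝ^d be sequences such that for all k ∈ ℕ: (i) b_{k+n} + Σ_{i=0}^{n−1} m_i b_{k+i} = 0, and (ii) x_{k+n} + Σ_{i=0}^{n−1} m_i x_{k+i} = Σ_{i=0}^{n−1} d_i (A x_{k+i} + b_{k+i}). Let ρ ∈ (0, 1) be such that for every λ ∈ [μ, L], every complex root of m(z) − λ·d(z) has modulus at most ρ. Then for every real r > ρ, ‖x_k − x*_k‖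 / r^k → 0 as k → ∞, where x*_k = −A⁻¹ b_k; in particular the algorithm asymptotically tracks the minimizer of f_k(x) = ½xᵀAx + b_kᵀx. -/
open Polynomial Filter Matrix

section
variable {ρ : ℝ}

section
variable {ρ : ℝ}


noncomputable def shiftE : Module.End ℂ (ℕ → ℂ) where
  toFun u := fun k => u (k+1)
  map_add' _ _ := rfl
  map_smul' _ _ := rfl

lemma shiftE_pow (i : ℕ) : ∀ (u : ℕ → ℂ) (k : ℕ), (shiftE ^ i) u k = u (k + i) := by
  induction i with
  | zero => intro u k; rfl
  | succ j ih =>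
    intro u k
    rw [pow_succ]
    show (shiftE ^ j) (shiftE u) k = _
    rw [ih]
    show u (k + j + 1) = _
    ring_nf

lemma aeval_shiftE_apply (p : ℂ[X]) (u : ℕ → ℂ) (k : ℕ) :
    (aeval shiftE p) u k = ∑ i ∈ Finset.range (p.natDegree + 1), p.coeff i * u (k + i) := by
  rw [aeval_eq_sum_range]
  simp only [LinearMap.coe_sum, Finset.sum_apply, LinearMap.smul_apply, Pi.smul_apply,
    smul_eq_mul]
  exact Finset.sum_congr rfl fun i _ => by rw [shiftE_pow]

lemma geom_step {ρ : ℝ} (hρ : 0 < ρ) {z : ℂ} (hz : ‖z‖ ≤ ρ) (u : ℕ → ℂ)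
    {C : ℝ} (hC : 0 ≤ C) (n : ℕ)
    (hv : ∀ k, ‖u (k+1) - z * u k‖ ≤ C * (k+1)^n * ρ^k) :
    ∀ k, ‖u k‖ ≤ (‖u 0‖ + C/ρ) * (k+1)^(n+1) * ρ^k := by
  set a := ‖u 0‖ with ha
  have ha0 : 0 ≤ a := norm_nonneg _
  have hc0 : 0 ≤ C / ρ := div_nonneg hC hρ.le
  have key : ∀ k : ℕ, ‖u k‖ ≤ (a + (C/ρ) * k) * (k+1)^n * ρ^k := by
    intro k
    induction k with
    | zero => simp [ha]
    | succ k ih =>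
      have h1 : ‖u (k+1)‖ ≤ ‖z‖ * ‖u k‖
          + ‖u (k+1) - z * u k‖ := by
        calc ‖u (k+1)‖ = ‖z * u k + (u (k+1) - z * u k)‖ := by ring_nf
        _ ≤ ‖z * u k‖ + ‖u (k+1) - z * u k‖ := norm_add_le _ _
        _ = _ := by rw [norm_mul]
      have h2 : ‖z‖ * ‖u k‖ ≤ ρ * ((a + (C/ρ) * k) * (k+1)^n * ρ^k) := by
        apply mul_le_mul hz ih (norm_nonneg _) hρ.le
      have h3 := hv k
      have hkn : (0:ℝ) ≤ ((k:ℝ)+1)^n := by positivity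
      have hrk : (0:ℝ) ≤ ρ^k := by positivity
      calc ‖u (k+1)‖ ≤ ρ * ((a + (C/ρ) * k) * (k+1)^n * ρ^k) + C * (k+1)^n * ρ^k :=
            by linarith
      _ = (a + (C/ρ) * (k+1)) * (k+1)^n * ρ^(k+1) := by
            field_simp
            ring
      _ ≤ (a + (C/ρ) * (k+1)) * ((k:ℝ)+1+1)^n * ρ^(k+1) := by
            gcongr
            linarith
      _ = (a + (C/ρ) * ((k:ℕ)+1:ℕ)) * (((k:ℕ)+1:ℕ)+1:ℝ)^n * ρ^(k+1) := by push_cast; ring_nf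
  intro k
  calc ‖u k‖ ≤ (a + (C/ρ) * k) * (k+1)^n * ρ^k := key k
  _ ≤ ((a + C/ρ) * ((k:ℝ)+1)) * (k+1)^n * ρ^k := by
      have h6 : a + (C/ρ) * k ≤ (a + C/ρ) * ((k:ℝ)+1) := by
        nlinarith [Nat.cast_nonneg (α := ℝ) k]
      gcongr
  _ = (a + C/ρ) * (k+1)^(n+1) * ρ^k := by ring

lemma poly_sol_bound (hρ : 0 < ρ) :
    ∀ (n : ℕ) (p : ℂ[X]), p.Monic → p.natDegree = n →
    (∀ z : ℂ, p.IsRoot z → ‖z‖ ≤ ρ) →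
    ∀ u : ℕ → ℂ, (aeval shiftE p) u = 0 →
    ∃ C : ℝ, 0 ≤ C ∧ ∀ k, ‖u k‖ ≤ C * (k+1)^n * ρ^k := by
  intro n
  induction n with
  | zero =>
    intro p hmon hdeg _ u hu
    have hp1 : p = 1 := (hmon.natDegree_eq_zero).mp hdeg
    refine ⟨0, le_refl _, fun k => ?_⟩
    have : u = 0 := by simpa [hp1] using hu
    simp [this]
  | succ n ih =>
    intro p hmon hdeg hroots u hu
    have hdegpos : 0 < p.degree := natDegree_pos_iff_degree_pos.mp (by omega)
    obtain ⟨z, hz⟩ := Complex.exists_root hdegpos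
    obtain ⟨q, hq⟩ := (dvd_iff_isRoot.mpr hz)
    have hXz : (X - Polynomial.C z).Monic := monic_X_sub_C z
    have hqmon : q.Monic := by
      have := hmon
      rw [hq] at this
      exact (hXz.of_mul_monic_left this)
    have hqdeg : q.natDegree = n := by
      have h := hdeg
      rw [hq, (hXz.natDegree_mul hqmon)] at h
      simp [natDegree_X_sub_C] at h
      omega
    have hqroots : ∀ w : ℂ, q.IsRoot w → ‖w‖ ≤ ρ := by
      intro w hw
      apply hroots
      rw [hq]
      simp [IsRoot, hw.eq_zero]
    set v : ℕ → ℂ := (aeval shiftE (X - Polynomial.C z)) u with hv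
    have hqv : (aeval shiftE q) v = 0 := by
      rw [hv, ← Module.End.mul_apply, ← _root_.map_mul, mul_comm, ← hq, hu]
    have hvk : ∀ k, v k = u (k+1) - z * u k := by
      intro k
      simp only [hv, map_sub, aeval_X, aeval_C, LinearMap.sub_apply,
        Module.algebraMap_end_apply, Pi.sub_apply, Pi.smul_apply, smul_eq_mul]
      rfl
    obtain ⟨C, hC0, hCb⟩ := ih q hqmon hqdeg hqroots v hqv
    have hv' : ∀ k, ‖u (k+1) - z * u k‖ ≤ C * (k+1)^n * ρ^k := by
      intro k; rw [← hvk]; exact hCb k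
    refine ⟨‖u 0‖ + C/ρ, by positivity, ?_⟩
    exact geom_step hρ (hroots z hz) u hC0 n hv'

lemma scalar_tendsto (hρ : 0 < ρ) {r : ℝ} (hr : ρ < r) {C : ℝ} (hC : 0 ≤ C) (n : ℕ)
    (u : ℕ → ℂ) (hb : ∀ k, ‖u k‖ ≤ C * (k+1)^n * ρ^k) :
    Tendsto (fun k : ℕ => ‖u k‖ / r^k) atTop (nhds 0) := by
  have hr0 : 0 < r := hρ.trans hr
  set s : ℝ := ρ / r with hs
  have hs0 : 0 < s := div_pos hρ hr0
  have hs1 : s < 1 := (div_lt_one hr0).mpr hr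
  have h1 : Tendsto (fun k : ℕ => (C/s) * (((k+1):ℕ)^n * s^(k+1))) atTop (nhds 0) := by
    have h0 := (tendsto_pow_const_mul_const_pow_of_lt_one n hs0.le hs1).comp
      (tendsto_add_atTop_nat 1)
    simpa using h0.const_mul (C/s)
  have h2 : Tendsto (fun k : ℕ => C * ((k:ℝ)+1)^n * s^k) atTop (nhds 0) := by
    apply h1.congr
    intro k
    push_cast
    field_simp
    ring
  apply squeeze_zero (fun k => div_nonneg (norm_nonneg _) (by positivity)) _ h2
  intro k
  rw [div_le_iff₀ (by positivity)]
  calc ‖u k‖ ≤ C * (k+1)^n * ρ^k := hb k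
  _ = C * ((k:ℝ)+1)^n * s^k * r^k := by
      rw [hs, div_pow]
      field_simp

end


/-- **Exact asymptotic tracking at rate ρ (Lemma 1 (L1.2) + Lemma 2, sufficiency).**
Let `A` be a `d×d` real symmetric matrix with all eigenvalues in `[μ, L]`,
`0 < μ < L`. Suppose `b` satisfies the model recurrence
`b_{k+n} + Σ m_i b_{k+i} = 0` and the iterates satisfy
`x_{k+n} + Σ m_i x_{k+i} = Σ d_i (A x_{k+i} + b_{k+i})`, where `m` is monic of
degree `n ≥ 1` and `deg d < n`. If `ρ ∈ (0,1)` is such that for every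
`λ ∈ [μ, L]` every complex root of `m - λ·d` has modulus at most `ρ`, then
`‖x_k - x*_k‖ / r^k → 0` for every `r > ρ`, where `x*_k = -A⁻¹ b_k`. -/

theorem matrix_tracking
    (dim : ℕ) (A : Matrix (Fin dim) (Fin dim) ℝ) (hsymm : A.IsSymm)
    (μ L : ℝ) (hμ : 0 < μ) (hμL : μ < L)
    (heig : ∀ t ∈ spectrum ℝ A, t ∈ Set.Icc μ L)
    (n : ℕ) (hn : 1 ≤ n)
    (m : Polynomial ℝ) (hm : m.Monic) (hmdeg : m.natDegree = n)
    (d : Polynomial ℝ) (hd : d.degree < (n : WithBot ℕ))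
    (b x : ℕ → Fin dim → ℝ)
    (hb : ∀ k : ℕ, b (k + n) + ∑ i ∈ Finset.range n, m.coeff i • b (k + i) = 0)
    (hx : ∀ k : ℕ, x (k + n) + ∑ i ∈ Finset.range n, m.coeff i • x (k + i) =
      ∑ i ∈ Finset.range n, d.coeff i • (A.mulVec (x (k + i)) + b (k + i)))
    (ρ : ℝ) (hρ : ρ ∈ Set.Ioo (0 : ℝ) 1)
    (hroots : ∀ lam ∈ Set.Icc μ L, ∀ z : ℂ,
      ((m - C lam * d).map (algebraMap ℝ ℂ)).IsRoot z → ‖z‖ ≤ ρ)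
    (r : ℝ) (hr : ρ < r) :
    Tendsto (fun k : ℕ => ‖x k - (-(A⁻¹.mulVec (b k)))‖ / r ^ k) atTop (nhds 0) := by
  obtain ⟨hρ0, hρ1⟩ := hρ
  have hr0 : 0 < r := hρ0.trans hr
  -- A is Hermitian
  have hA : A.IsHermitian := by
    rwa [Matrix.IsHermitian, Matrix.conjTranspose_eq_transpose_of_trivial]
  -- A is invertible
  have hAdet : IsUnit A.det := by
    by_contra h
    have h0 : (0:ℝ) ∈ spectrum ℝ A := by
      rw [spectrum.mem_iff]
      intro hu
      simp only [map_zero, zero_sub, IsUnit.neg_iff] at hu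
      exact h ((Matrix.isUnit_iff_isUnit_det A).mp hu)
    have := (heig 0 h0).1
    linarith
  have hAAinv : A * A⁻¹ = 1 := Matrix.mul_nonsing_inv A hAdet
  -- linearity helper
  have lin : ∀ (M : Matrix (Fin dim) (Fin dim) ℝ) (s : Finset ℕ) (c : ℕ → ℝ)
      (w : ℕ → Fin dim → ℝ),
      M.mulVec (∑ i ∈ s, c i • w i) = ∑ i ∈ s, c i • M.mulVec (w i) := by
    intro M s c w
    simp only [← Matrix.mulVecLin_apply, map_sum, _root_.map_smul]
  -- error sequence
  set e : ℕ → Fin dim → ℝ := fun k => x k + A⁻¹.mulVec (b k) with hedef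
  have he : ∀ k, e (k + n) + ∑ i ∈ Finset.range n, m.coeff i • e (k + i)
      = ∑ i ∈ Finset.range n, d.coeff i • A.mulVec (e (k + i)) := by
    intro k
    have h1 : A⁻¹.mulVec (b (k + n)) + ∑ i ∈ Finset.range n, m.coeff i • A⁻¹.mulVec (b (k + i))
        = 0 := by
      rw [← lin, ← Matrix.mulVec_add, hb k, Matrix.mulVec_zero]
    have h2 : ∀ i, A.mulVec (e (k + i)) = A.mulVec (x (k + i)) + b (k + i) := by
      intro i
      simp only [hedef, Matrix.mulVec_add, Matrix.mulVec_mulVec, hAAinv, Matrix.one_mulVec]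
    calc e (k + n) + ∑ i ∈ Finset.range n, m.coeff i • e (k + i)
        = (x (k + n) + ∑ i ∈ Finset.range n, m.coeff i • x (k + i))
          + (A⁻¹.mulVec (b (k + n)) + ∑ i ∈ Finset.range n, m.coeff i • A⁻¹.mulVec (b (k + i)))
          := by
          simp only [hedef, smul_add, Finset.sum_add_distrib]
          abel
      _ = ∑ i ∈ Finset.range n, d.coeff i • (A.mulVec (x (k + i)) + b (k + i)) := by
          rw [h1, hx k, add_zero]
      _ = ∑ i ∈ Finset.range n, d.coeff i • A.mulVec (e (k + i)) := by
          exact Finset.sum_congr rfl fun i _ => by rw [h2]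
  -- spectral decomposition
  set U : Matrix (Fin dim) (Fin dim) ℝ := (hA.eigenvectorUnitary : Matrix (Fin dim) (Fin dim) ℝ)
    with hUdef
  set lam : Fin dim → ℝ := hA.eigenvalues with hlamdef
  have hspec : A = U * diagonal lam * star U := by
    have := hA.spectral_theorem
    simpa [RCLike.ofReal_real_eq_id] using this
  have hUU : U * star U = 1 := (Matrix.mem_unitaryGroup_iff).mp (hA.eigenvectorUnitary).2
  have hsUU : star U * U = 1 := by
    have := Unitary.coe_star_mul_self (hA.eigenvectorUnitary)
    exact this
  have hWA : star U * A = diagonal lam * star U := by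
    rw [hspec, ← mul_assoc, ← mul_assoc, hsUU, one_mul]
  set y : ℕ → Fin dim → ℝ := fun k => (star U).mulVec (e k) with hydef
  have hy : ∀ k, y (k + n) + ∑ i ∈ Finset.range n, m.coeff i • y (k + i)
      = ∑ i ∈ Finset.range n, d.coeff i • (diagonal lam).mulVec (y (k + i)) := by
    intro k
    have h := congrArg (fun v => (star U).mulVec v) (he k)
    simp only [Matrix.mulVec_add, lin] at h
    rw [hydef]
    simp only []
    rw [h]
    exact Finset.sum_congr rfl fun i _ => by
      rw [Matrix.mulVec_mulVec, hWA, ← Matrix.mulVec_mulVec]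
  -- degree facts
  have hdnat : d.natDegree < n := by
    rcases eq_or_ne d 0 with h | h
    · simp only [h, natDegree_zero]; omega
    · exact Polynomial.natDegree_lt_iff_degree_lt h |>.mpr (by exact_mod_cast hd)
  have hmdeg' : m.degree = (n : WithBot ℕ) := by
    rw [Polynomial.degree_eq_natDegree hm.ne_zero, hmdeg]
  have hmon2 : ∀ t : ℝ, (m - Polynomial.C t * d).Monic := by
    intro t
    rw [sub_eq_add_neg]
    apply hm.add_of_left
    rw [Polynomial.degree_neg]
    calc (Polynomial.C t * d).degree ≤ d.degree := by
          rw [← Polynomial.smul_eq_C_mul]; exact Polynomial.degree_smul_le t d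
      _ < m.degree := by rw [hmdeg']; exact hd
  have hdeg2 : ∀ t : ℝ, (m - Polynomial.C t * d).natDegree = n := by
    intro t
    rw [Polynomial.natDegree_sub_eq_left_of_natDegree_lt, hmdeg]
    rw [hmdeg]
    exact lt_of_le_of_lt (Polynomial.natDegree_C_mul_le t d) hdnat
  -- per-coordinate scalar sequences
  have coord : ∀ j : Fin dim,
      Tendsto (fun k : ℕ => |y k j| / r ^ k) atTop (nhds 0) := by
    intro j
    set p : Polynomial ℂ := (m - Polynomial.C (lam j) * d).map (algebraMap ℝ ℂ) with hpdef
    have hpmon : p.Monic := (hmon2 (lam j)).map _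
    have hpdeg : p.natDegree = n := by
      rw [hpdef, (hmon2 (lam j)).natDegree_map, hdeg2]
    have hproots : ∀ z : ℂ, p.IsRoot z → ‖z‖ ≤ ρ := by
      intro z hz
      exact hroots (lam j) (heig _ (hA.eigenvalues_mem_spectrum_real j)) z hz
    set u : ℕ → ℂ := fun k => ((y k j : ℝ) : ℂ) with hudef
    have hreal : ∀ k,
        (∑ i ∈ Finset.range n, (m.coeff i - lam j * d.coeff i) * y (k + i) j) + y (k + n) j
          = 0 := by
      intro k
      have h := congrFun (hy k) j
      simp only [Pi.add_apply, Finset.sum_apply, Pi.smul_apply, smul_eq_mul,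
        Matrix.mulVec_diagonal] at h
      have hsplit : (∑ i ∈ Finset.range n, (m.coeff i - lam j * d.coeff i) * y (k + i) j)
          = (∑ i ∈ Finset.range n, m.coeff i * y (k + i) j)
            - ∑ i ∈ Finset.range n, d.coeff i * (lam j * y (k + i) j) := by
        rw [← Finset.sum_sub_distrib]
        exact Finset.sum_congr rfl fun i _ => by ring
      rw [hsplit]
      linarith
    have hu0 : (aeval shiftE p) u = 0 := by
      funext k
      rw [aeval_shiftE_apply, hpdeg, Finset.sum_range_succ]
      have hcn : p.coeff n = 1 := by
        have := hpmon.coeff_natDegree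
        rwa [hpdeg] at this
      have hci : ∀ i, p.coeff i = ((m.coeff i - lam j * d.coeff i : ℝ) : ℂ) := by
        intro i
        rw [hpdef, Polynomial.coeff_map, Polynomial.coeff_sub, Polynomial.coeff_C_mul]
        norm_cast
      show _ = (0 : ℕ → ℂ) k
      rw [hcn, one_mul, Pi.zero_apply]
      simp only [hci, hudef]
      exact_mod_cast hreal k
    obtain ⟨Cb, hCb0, hCb⟩ := poly_sol_bound hρ0 n p hpmon hpdeg hproots u hu0
    have := scalar_tendsto hρ0 hr hCb0 n u hCb
    apply this.congr
    intro k
    rw [hudef]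
    simp [Complex.norm_real]
  -- e in terms of y
  have heUy : ∀ k, e k = U.mulVec (y k) := by
    intro k
    rw [hydef]
    simp only [Matrix.mulVec_mulVec, hUU, Matrix.one_mulVec]
  -- tendsto of scaled error
  have hE : Tendsto (fun k : ℕ => (r ^ k)⁻¹ • e k) atTop (nhds 0) := by
    rw [tendsto_pi_nhds]
    intro i
    have : ∀ k : ℕ, ((r ^ k)⁻¹ • e k) i = ∑ j, U i j * (y k j / r ^ k) := by
      intro k
      rw [heUy]
      simp only [Pi.smul_apply, smul_eq_mul, Matrix.mulVec, dotProduct,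
        Finset.mul_sum]
      exact Finset.sum_congr rfl fun j _ => by ring
    simp only [this, Pi.zero_apply]
    have h0 : (0:ℝ) = ∑ j : Fin dim, U i j * 0 := by simp
    rw [h0]
    apply tendsto_finset_sum
    intro j _
    apply Tendsto.const_mul
    have hj := coord j
    rw [tendsto_zero_iff_abs_tendsto_zero]
    apply hj.congr
    intro k
    simp [Function.comp, abs_div, abs_of_pos (by positivity : (0:ℝ) < r ^ k)]
  have hEn : Tendsto (fun k : ℕ => ‖(r ^ k)⁻¹ • e k‖) atTop (nhds 0) := by
    simpa using hE.norm
  apply hEn.congr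
  intro k
  rw [norm_smul, norm_inv, Real.norm_eq_abs, abs_of_pos (by positivity : (0:ℝ) < r ^ k)]
  rw [sub_neg_eq_add]
  rw [inv_mul_eq_div]
end
end

section
/- Let 0 < μ < L be reals, let θ ∈ ℝ, and set ρ = √((L − μ)/(L + μ)), c₁ = −2cos(θ)/L, c₂ = −2/(L + μ). Then for every λ ∈ [μ, L], every complex root z of the polynomial z² − 2cos(θ)z + 1 − λ(c₁z − c₂) satisfies |z| ≤ ρ. Moreover, for λ = L this polynomial equals z² − (L − μ)/(L + μ), so its roots are exactly ±ρ. -/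
open Polynomial

set_option maxHeartbeats 1000000 in
/-- **n = 2 controller design for a complex-conjugate pair of unit-circle poles.**
For the model `m(z) = z² - 2cos(θ)z + 1` and the filter numerator
`d(z) = c₁z - c₂` with `c₁ = -2cos(θ)/L`, `c₂ = -2/(L+μ)`, every complex root of
`m(z) - λ·d(z)` has modulus at most `ρ = √((L-μ)/(L+μ))` for all `λ ∈ [μ, L]`;
moreover at `λ = L` the closed-loop polynomial equals `z² - (L-μ)/(L+μ)`, whose
roots are exactly `±ρ`. -/
theorem n2_complex_pair_design
    (μ L : ℝ) (hμ : 0 < μ) (hμL : μ < L) (θ : ℝ)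
    (ρ : ℝ) (hρ : ρ = Real.sqrt ((L - μ) / (L + μ)))
    (c₁ c₂ : ℝ) (hc₁ : c₁ = -2 * Real.cos θ / L) (hc₂ : c₂ = -2 / (L + μ)) :
    (∀ lam ∈ Set.Icc μ L, ∀ z : ℂ,
      (((X ^ 2 - C (2 * Real.cos θ) * X + C 1) - C lam * (C c₁ * X - C c₂)).map
        (algebraMap ℝ ℂ)).IsRoot z → ‖z‖ ≤ ρ) ∧
    ((X ^ 2 - C (2 * Real.cos θ) * X + C 1) - C L * (C c₁ * X - C c₂)
      = X ^ 2 - C ((L - μ) / (L + μ))) ∧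
    (∀ z : ℂ,
      (((X ^ 2 - C (2 * Real.cos θ) * X + C 1) - C L * (C c₁ * X - C c₂)).map
        (algebraMap ℝ ℂ)).IsRoot z ↔ z = (ρ : ℂ) ∨ z = -(ρ : ℂ)) := by
  have hL : 0 < L := hμ.trans hμL
  have hLμ : 0 < L + μ := by linarith
  have hL0 : L ≠ 0 := ne_of_gt hL
  have hLμ0 : L + μ ≠ 0 := ne_of_gt hLμ
  have hρ0 : 0 ≤ ρ := hρ ▸ Real.sqrt_nonneg _
  have hρ2 : ρ ^ 2 = (L - μ) / (L + μ) := by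
    rw [hρ, Real.sq_sqrt (div_nonneg (by linarith) (by linarith))]
  -- ρ ≤ L/(L+μ)
  have hρ_le : ρ ≤ L / (L + μ) := by
    have h1 : (L - μ) / (L + μ) ≤ (L / (L + μ)) ^ 2 := by
      rw [div_pow, div_le_div_iff₀ hLμ (by positivity)]
      nlinarith [mul_pos hLμ (mul_pos hμ hμ)]
    calc ρ ≤ Real.sqrt ((L / (L + μ)) ^ 2) := hρ ▸ Real.sqrt_le_sqrt h1
      _ = L / (L + μ) := Real.sqrt_sq (by positivity)
  -- (L-μ)/L ≤ ρ
  have hρ_ge : (L - μ) / L ≤ ρ := by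
    rw [hρ, Real.le_sqrt (div_nonneg (by linarith) hL.le)
      (div_nonneg (by linarith) hLμ.le)]
    rw [div_pow, div_le_div_iff₀ (by positivity) hLμ]
    nlinarith [mul_nonneg (by linarith : (0:ℝ) ≤ L - μ) (mul_pos hμ hμ).le]
  -- the polynomial identity at λ = L
  have e1 : 2 * Real.cos θ + L * c₁ = 0 := by
    rw [hc₁]; field_simp; ring
  have e2 : 1 + L * c₂ = -((L - μ) / (L + μ)) := by
    rw [hc₂]; field_simp; ring
  have hpoly : (X ^ 2 - C (2 * Real.cos θ) * X + C 1) - C L * (C c₁ * X - C c₂)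
      = X ^ 2 - C ((L - μ) / (L + μ)) := by
    have h : (X ^ 2 - C (2 * Real.cos θ) * X + C 1) - C L * (C c₁ * X - C c₂)
        = X ^ 2 - C (2 * Real.cos θ + L * c₁) * X + C (1 + L * c₂) := by
      simp only [C_add, C_mul]; ring
    rw [h, e1, e2]
    simp only [map_zero, map_neg]
    ring
  refine ⟨?_, hpoly, ?_⟩
  · -- the root bound
    rintro lam ⟨hlam1, hlam2⟩ z hz
    obtain ⟨B, hBdef⟩ : ∃ B : ℝ, B = 2 * Real.cos θ + lam * c₁ := ⟨_, rfl⟩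
    obtain ⟨Cc, hCdef⟩ : ∃ Cc : ℝ, Cc = 1 + lam * c₂ := ⟨_, rfl⟩
    simp only [Polynomial.IsRoot, Polynomial.eval_map, Polynomial.eval₂_sub,
      Polynomial.eval₂_add, Polynomial.eval₂_mul, Polynomial.eval₂_pow,
      Polynomial.eval₂_X, Polynomial.eval₂_C, Complex.coe_algebraMap] at hz
    have heq : z * z - (B : ℂ) * z + (Cc : ℂ) = 0 := by
      rw [hBdef, hCdef]
      push_cast at hz ⊢
      linear_combination hz
    obtain ⟨x, hxdef⟩ : ∃ x : ℝ, x = z.re := ⟨_, rfl⟩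
    obtain ⟨y, hydef⟩ : ∃ y : ℝ, y = z.im := ⟨_, rfl⟩
    have hre : x * x - y * y - B * x + Cc = 0 := by
      have h := congrArg Complex.re heq
      simpa [Complex.mul_re, Complex.mul_im, ← hxdef, ← hydef] using h
    have him : x * y + y * x - B * y = 0 := by
      have h := congrArg Complex.im heq
      simpa [Complex.mul_re, Complex.mul_im, ← hxdef, ← hydef] using h
    -- values of B and Cc
    have hBval : B = 2 * Real.cos θ * ((L - lam) / L) := by
      rw [hBdef, hc₁]; field_simp; ring
    have hCc : Cc = (L + μ - 2 * lam) / (L + μ) := by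
      rw [hCdef, hc₂]; field_simp; ring
    have hBabs : |B| ≤ 2 * ((L - lam) / L) := by
      rw [hBval, abs_mul, abs_mul]
      have h1 : |Real.cos θ| ≤ 1 := Real.abs_cos_le_one θ
      have h2 : |(L - lam) / L| = (L - lam) / L :=
        abs_of_nonneg (div_nonneg (by linarith) hL.le)
      rw [h2, abs_two]
      nlinarith [abs_nonneg (Real.cos θ), div_nonneg (by linarith : (0:ℝ) ≤ L - lam) hL.le]
    have hCc_le : Cc ≤ ρ ^ 2 := by
      rw [hCc, hρ2, div_le_div_iff₀ hLμ hLμ]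
      nlinarith
    -- key inequalities
    have hA : |B| * ρ ≤ ρ ^ 2 + Cc := by
      have h1 : |B| * ρ ≤ (2 * ((L - lam) / L)) * (L / (L + μ)) :=
        mul_le_mul hBabs hρ_le hρ0 (mul_nonneg (by norm_num) (div_nonneg (by linarith) hL.le))
      have h2 : (2 * ((L - lam) / L)) * (L / (L + μ)) = 2 * (L - lam) / (L + μ) := by
        field_simp
      have h3 : ρ ^ 2 + Cc = 2 * (L - lam) / (L + μ) := by
        rw [hρ2, hCc]; field_simp; ring
      linarith [h1, h2 ▸ h1]
    have hCb : |B| ≤ 2 * ρ := by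
      have h1 : 2 * ((L - lam) / L) ≤ 2 * ((L - μ) / L) := by
        gcongr
      linarith [hρ_ge]
    rcases eq_or_ne y 0 with hy0 | hy0
    · -- real root case
      have hre' : x * x - B * x + Cc = 0 := by
        rw [hy0] at hre; linarith
      have habs : ‖z‖ = |x| := by
        rw [Complex.norm_def, Complex.normSq_apply, ← hxdef, ← hydef, hy0]
        simpa using Real.sqrt_mul_self_eq_abs x
      rw [habs]
      by_contra hcon
      push_neg at hcon
      have hxρ : ρ < |x| := hcon
      have hBx : B * x ≤ |B| * |x| := by
        calc B * x ≤ |B * x| := le_abs_self _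
          _ = |B| * |x| := abs_mul _ _
      have hfac : 0 < (|x| - ρ) * (|x| + ρ - |B|) := by
        apply mul_pos (by linarith)
        linarith
      have habs2 : |x| * |x| = x * x := abs_mul_abs_self x
      have hexp : (|x| - ρ) * (|x| + ρ - |B|)
          = |x| * |x| - |B| * |x| - ρ ^ 2 + |B| * ρ := by ring
      linarith [hfac, hexp, habs2, hBx, hre', hA]
    · -- complex-conjugate case: x = B/2
      have h2 : (2 * x - B) * y = 0 := by linear_combination him
      have hBx : B = 2 * x := by
        rcases mul_eq_zero.mp h2 with h | h
        · linarith
        · exact absurd h hy0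
      have hsum : x * x + y * y = Cc := by
        rw [hBx] at hre; linarith
      have habs : ‖z‖ = Real.sqrt (x * x + y * y) := by
        rw [Complex.norm_def, Complex.normSq_apply, ← hxdef, ← hydef]
      rw [habs, hsum]
      calc Real.sqrt Cc ≤ Real.sqrt (ρ ^ 2) := Real.sqrt_le_sqrt hCc_le
        _ = ρ := Real.sqrt_sq hρ0
  · -- the roots at λ = L
    intro z
    rw [hpoly]
    have hcoer : ((algebraMap ℝ ℂ) ((L - μ) / (L + μ)) : ℂ) = ((ρ : ℂ)) ^ 2 := by
      rw [← hρ2]; push_cast [Complex.coe_algebraMap]; ring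
    constructor
    · intro hz
      simp only [Polynomial.IsRoot, Polynomial.eval_map, Polynomial.eval₂_sub,
        Polynomial.eval₂_pow, Polynomial.eval₂_X, Polynomial.eval₂_C] at hz
      rw [hcoer] at hz
      have : (z - (ρ : ℂ)) * (z + (ρ : ℂ)) = 0 := by linear_combination hz
      rcases mul_eq_zero.mp this with h | h
      · left; exact sub_eq_zero.mp h
      · right; exact eq_neg_of_add_eq_zero_left h
    · intro hz
      simp only [Polynomial.IsRoot, Polynomial.eval_map, Polynomial.eval₂_sub,
        Polynomial.eval₂_pow, Polynomial.eval₂_X, Polynomial.eval₂_C]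
      rw [hcoer]
      rcases hz with h | h <;> rw [h] <;> ring
end

section
/- Let 0 < μ < L be reals and set ρ = √((L − μ)/(L + μ)). Then for every λ ∈ [μ, L], every complex root z of the polynomial z² − 1 + 2λ/(L + μ) satisfies |z| ≤ ρ. Moreover, for λ = μ the polynomial equals z² − ρ² (roots ±ρ), and for λ = L it equals z² + ρ² (roots ±iρ). -/
open Polynomial

lemma sq_eq_sq_iffC (z w : ℂ) : z ^ 2 = w ^ 2 ↔ z = w ∨ z = -w := by
  constructor
  · intro h
    have h0 : (z - w) * (z + w) = 0 := by linear_combination h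
    rcases mul_eq_zero.mp h0 with h1 | h1
    · exact Or.inl (sub_eq_zero.mp h1)
    · exact Or.inr (eq_neg_of_add_eq_zero_left h1)
  · rintro (rfl | rfl) <;> ring

/-- **n = 2 controller design for real unit-circle poles at ±1 (model m(z) = z² - 1).**
With the filter numerator `d(z) = -2/(L+μ)` (i.e. `c₁ = 0`, `c₂ = 2/(L+μ)`), the
closed-loop polynomial is `z² - 1 + 2λ/(L+μ)`; every complex root has modulus at
most `ρ = √((L-μ)/(L+μ))` for all `λ ∈ [μ, L]`; at `λ = μ` it equals `z² - ρ²`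
(roots `±ρ`) and at `λ = L` it equals `z² + ρ²` (roots `±iρ`). -/
theorem n2_real_poles_design
    (μ L : ℝ) (hμ : 0 < μ) (hμL : μ < L)
    (ρ : ℝ) (hρ : ρ = Real.sqrt ((L - μ) / (L + μ))) :
    (∀ lam ∈ Set.Icc μ L, ∀ z : ℂ,
      ((X ^ 2 - C 1 + C (2 * lam / (L + μ)) : Polynomial ℝ).map
        (algebraMap ℝ ℂ)).IsRoot z → ‖z‖ ≤ ρ) ∧
    ((X ^ 2 - C 1 + C (2 * μ / (L + μ)) : Polynomial ℝ) = X ^ 2 - C (ρ ^ 2)) ∧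
    (∀ z : ℂ,
      ((X ^ 2 - C 1 + C (2 * μ / (L + μ)) : Polynomial ℝ).map
        (algebraMap ℝ ℂ)).IsRoot z ↔ z = (ρ : ℂ) ∨ z = -(ρ : ℂ)) ∧
    ((X ^ 2 - C 1 + C (2 * L / (L + μ)) : Polynomial ℝ) = X ^ 2 + C (ρ ^ 2)) ∧
    (∀ z : ℂ,
      ((X ^ 2 - C 1 + C (2 * L / (L + μ)) : Polynomial ℝ).map
        (algebraMap ℝ ℂ)).IsRoot z ↔
        z = (ρ : ℂ) * Complex.I ∨ z = -((ρ : ℂ) * Complex.I)) := by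
  have hS : 0 < L + μ := by linarith
  have hnn : 0 ≤ (L - μ) / (L + μ) := div_nonneg (by linarith) hS.le
  have hρ0 : 0 ≤ ρ := hρ ▸ Real.sqrt_nonneg _
  have hρ2 : ρ ^ 2 = (L - μ) / (L + μ) := by
    rw [hρ, Real.sq_sqrt hnn]
  have hμeq : 2 * μ / (L + μ) - 1 = -(ρ ^ 2) := by
    rw [hρ2]; field_simp; ring
  have hLeq : 2 * L / (L + μ) - 1 = ρ ^ 2 := by
    rw [hρ2]; field_simp; ring
  have key : ∀ a : ℝ, ∀ z : ℂ,
      ((X ^ 2 - C 1 + C a : Polynomial ℝ).map (algebraMap ℝ ℂ)).IsRoot z ↔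
      z ^ 2 = ((1 - a : ℝ) : ℂ) := by
    intro a z
    simp only [Polynomial.IsRoot, Polynomial.eval_map, Polynomial.eval₂_add,
      Polynomial.eval₂_sub, Polynomial.eval₂_pow, Polynomial.eval₂_X,
      Polynomial.eval₂_C, Complex.coe_algebraMap]
    push_cast
    constructor
    · intro h; linear_combination h
    · intro h; linear_combination h
  refine ⟨?_, ?_, ?_, ?_, ?_⟩
  · rintro lam ⟨h1, h2⟩ z hz
    rw [key] at hz
    have habs : ‖z‖ ^ 2 = |1 - 2 * lam / (L + μ)| := by
      rw [← norm_pow, hz, Complex.norm_real, Real.norm_eq_abs]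
    have hb : |1 - 2 * lam / (L + μ)| ≤ ρ ^ 2 := by
      have e : 1 - 2 * lam / (L + μ) = (L + μ - 2 * lam) / (L + μ) := by
        field_simp
      rw [e, hρ2, abs_div, abs_of_pos hS, div_le_div_iff_of_pos_right hS, abs_le]
      constructor <;> linarith
    nlinarith [norm_nonneg z, habs, hb]
  · have : (X ^ 2 - C 1 + C (2 * μ / (L + μ)) : Polynomial ℝ)
        = X ^ 2 + C (2 * μ / (L + μ) - 1) := by rw [C_sub, C_1]; ring
    rw [this, hμeq, C_neg]; ring
  · intro z
    rw [key]
    have : ((1 - 2 * μ / (L + μ) : ℝ) : ℂ) = (ρ : ℂ) ^ 2 := by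
      have : (1 - 2 * μ / (L + μ) : ℝ) = ρ ^ 2 := by linarith [hμeq]
      rw [this]; push_cast; ring
    rw [this, sq_eq_sq_iffC]
  · have : (X ^ 2 - C 1 + C (2 * L / (L + μ)) : Polynomial ℝ)
        = X ^ 2 + C (2 * L / (L + μ) - 1) := by rw [C_sub, C_1]; ring
    rw [this, hLeq]
  · intro z
    rw [key]
    have : ((1 - 2 * L / (L + μ) : ℝ) : ℂ) = ((ρ : ℂ) * Complex.I) ^ 2 := by
      have h1 : (1 - 2 * L / (L + μ) : ℝ) = -(ρ ^ 2) := by linarith [hLeq]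
      rw [h1]; push_cast
      rw [mul_pow, Complex.I_sq]; ring
    rw [this, sq_eq_sq_iffC]
end

section
/- Let 0 < μ < L be reals and let θ ∈ (0, π). Consider the monic model m(z) = z² − 2cos(θ)z + 1 ∈ ℝ[z]. Then the infimum, over all real polynomials d of degree at most 1, of the quantity sup_{λ∈[μ,L]} max{|z| : z a complex root of m(z) − λ·d(z)} equals √((L − μ)/(L + μ)); it is attained by d(z) = c₁z − c₂ with c₁ = −2cos(θ)/L and c₂ = −2/(L + μ). -/
open Polynomial

/- Auxiliary lemmas about complex roots of real monic quadratics. -/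

lemma quad_re_im_aux {b c : ℝ} {z : ℂ} (h : z^2 - b*z + c = 0) :
    z.re^2 - z.im^2 - b*z.re + c = 0 ∧ z.im*(2*z.re - b) = 0 := by
  have hre := congrArg Complex.re h
  have him := congrArg Complex.im h
  simp [Complex.add_re, Complex.sub_re, Complex.mul_re, Complex.mul_im, pow_two,
    Complex.ofReal_re, Complex.ofReal_im] at hre him
  constructor <;> nlinarith [hre, him]

lemma real_root_bound_aux {b c ρ x : ℝ} (hre : x^2 - b*x + c = 0)
    (hb1 : b*ρ ≤ ρ^2 + c) (hb2 : -b*ρ ≤ ρ^2 + c) (h2 : c ≤ ρ^2) (hρ : 0 < ρ) :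
    x^2 ≤ ρ^2 := by
  have hbu : b ≤ 2*ρ := by nlinarith
  have hbl : -(2*ρ) ≤ b := by nlinarith
  have h1 : x ≤ ρ := by
    by_contra hgt
    push_neg at hgt
    have hp : 0 < (x - ρ) * (x + ρ - b) := mul_pos (by linarith) (by linarith)
    nlinarith
  have h2' : -ρ ≤ x := by
    by_contra hlt
    push_neg at hlt
    have hp : 0 < (x + ρ) * (x - ρ - b) :=
      mul_pos_of_neg_of_neg (by linarith) (by linarith)
    nlinarith
  nlinarith

lemma root_bound_aux {b c ρ : ℝ} {z : ℂ} (h : z^2 - b*z + c = 0)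
    (h1 : |b| * ρ ≤ ρ^2 + c) (h2 : c ≤ ρ^2) (hρ : 0 < ρ) : ‖z‖ ≤ ρ := by
  obtain ⟨hre, him⟩ := quad_re_im_aux h
  have hsq : z.re^2 + z.im^2 ≤ ρ^2 := by
    rcases mul_eq_zero.mp him with hy | hx
    · rw [hy] at hre ⊢
      have hb1 : b*ρ ≤ ρ^2 + c :=
        le_trans (mul_le_mul_of_nonneg_right (le_abs_self b) hρ.le) h1
      have hb2 : -b*ρ ≤ ρ^2 + c :=
        le_trans (mul_le_mul_of_nonneg_right (neg_le_abs b) hρ.le) h1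
      have := real_root_bound_aux (by linarith : z.re^2 - b*z.re + c = 0) hb1 hb2 h2 hρ
      nlinarith
    · have hb : b = 2*z.re := by linarith
      rw [hb] at hre
      nlinarith
  have := Complex.sq_norm z
  rw [Complex.normSq_apply] at this
  nlinarith [norm_nonneg z]

lemma root_exact_aux {b c : ℝ} {z : ℂ} (h : z^2 - b*z + c = 0) (hd : b^2 < 4*c) :
    ‖z‖ ^ 2 = c := by
  obtain ⟨hre, him⟩ := quad_re_im_aux h
  rcases mul_eq_zero.mp him with hy | hx
  · exfalso; rw [hy] at hre; nlinarith [sq_nonneg (2*z.re - b)]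
  · have hb : b = 2*z.re := by linarith
    rw [hb] at hre
    rw [Complex.sq_norm, Complex.normSq_apply]
    linear_combination -hre

lemma exists_root_pair_aux (b c : ℝ) :
    ∃ z w : ℂ, (z^2 - b*z + c = 0) ∧ (w^2 - b*w + c = 0) ∧ z*w = c := by
  obtain ⟨z, hz⟩ : ∃ z : ℂ, z^2 - (b:ℂ)*z + c = 0 := by
    have hdeg : (X^2 - C ((algebraMap ℝ ℂ) b) * X + C ((algebraMap ℝ ℂ) c) : ℂ[X]).degree = 2 := by
      compute_degree!
    have h2 : (0:WithBot ℕ) < ((X^2 - C b * X + C c : ℝ[X]).map (algebraMap ℝ ℂ)).degree := by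
      simp only [Polynomial.map_add, Polynomial.map_sub, Polynomial.map_mul, Polynomial.map_pow,
        map_X, map_C, hdeg]
      norm_num
    obtain ⟨z, hz⟩ := Complex.exists_root h2
    refine ⟨z, ?_⟩
    have := hz
    simp only [IsRoot, Polynomial.eval_map, ← aeval_def, map_add, map_sub, map_mul, map_pow,
      aeval_X, aeval_C] at this
    simpa using this
  exact ⟨z, b - z, hz, by linear_combination hz, by linear_combination -hz⟩

lemma crude_bound_aux {b c : ℝ} {z : ℂ} (h : z^2 - b*z + c = 0) :
    ‖z‖ ≤ max 1 (|b|+|c|) := by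
  rcases le_or_gt (‖z‖) 1 with h1 | h1
  · exact le_trans h1 (le_max_left _ _)
  · refine le_trans ?_ (le_max_right _ _)
    have hz2 : z^2 = b*z - c := by linear_combination h
    have habs : (‖z‖)^2 ≤ |b| * ‖z‖ + |c| := by
      calc (‖z‖)^2 = ‖z^2‖ := by rw [norm_pow]
        _ = ‖(b:ℂ)*z - (c:ℂ)‖ := by rw [hz2]
        _ ≤ ‖(b:ℂ)*z‖ + ‖(c:ℂ)‖ := by
            simpa using norm_sub_le ((b:ℂ)*z) (c:ℂ)
        _ = |b| * ‖z‖ + |c| := by simp [norm_mul]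
    nlinarith [norm_nonneg z, abs_nonneg c, abs_nonneg b,
      mul_nonneg (by linarith : (0:ℝ) ≤ ‖z‖ - 1) (abs_nonneg c)]

lemma mem_rootSet_quad_aux (b c : ℝ) (z : ℂ) :
    z ∈ (X^2 - C b * X + C c : ℝ[X]).rootSet ℂ ↔ z^2 - b*z + c = 0 := by
  rw [mem_rootSet]
  simp only [map_add, map_sub, map_mul, map_pow, aeval_X, aeval_C]
  constructor
  · rintro ⟨-, h⟩; simpa using h
  · intro h
    refine ⟨?_, by simpa using h⟩
    intro h0
    have := congrArg (fun p => coeff p 2) h0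
    simp at this

set_option maxHeartbeats 2000000 in
/-- **Optimal worst-case rate for the model m(z) = z² - 2cos(θ)z + 1 (n = 2).**
For `0 < μ < L` and `θ ∈ (0, π)`, the infimum, over all real polynomials `d` of
degree at most `1`, of the worst case (over `λ ∈ [μ, L]`) of the largest modulus
of a complex root of `m(z) - λ·d(z)` equals `√((L-μ)/(L+μ))`, and it is attained
by `d(z) = c₁z - c₂` with `c₁ = -2cos(θ)/L` and `c₂ = -2/(L+μ)`. -/
theorem n2_minimax_rate
    (μ L : ℝ) (hμ : 0 < μ) (hμL : μ < L)
    (θ : ℝ) (hθ : θ ∈ Set.Ioo 0 Real.pi)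
    (m : Polynomial ℝ) (hm : m = X ^ 2 - C (2 * Real.cos θ) * X + C 1)
    (rate : Polynomial ℝ → ℝ)
    (hrate : ∀ d : Polynomial ℝ, rate d =
      ⨆ lam : Set.Icc μ L,
        sSup ((fun z : ℂ => ‖z‖) '' ((m - C (lam : ℝ) * d).rootSet ℂ))) :
    IsLeast (rate '' {d : Polynomial ℝ | d.degree ≤ 1})
        (Real.sqrt ((L - μ) / (L + μ))) ∧
    rate (C (-2 * Real.cos θ / L) * X - C (-2 / (L + μ)))
      = Real.sqrt ((L - μ) / (L + μ)) := by
  obtain ⟨hθ0, hθπ⟩ := hθ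
  have hL : 0 < L := hμ.trans hμL
  have hLμ : 0 < L + μ := by linarith
  set ρ := Real.sqrt ((L - μ) / (L + μ)) with hρdef
  have hfrac : 0 < (L - μ) / (L + μ) := div_pos (by linarith) hLμ
  have hρpos : 0 < ρ := Real.sqrt_pos.mpr hfrac
  have hρsq : ρ ^ 2 = (L - μ) / (L + μ) := Real.sq_sqrt hfrac.le
  have hcos2 : Real.cos θ ^ 2 < 1 := by
    have hs := Real.sin_pos_of_pos_of_lt_pi hθ0 hθπ
    nlinarith [Real.sin_sq_add_cos_sq θ]
  haveI : Nonempty (Set.Icc μ L) := ⟨⟨μ, Set.mem_Icc.mpr ⟨le_rfl, hμL.le⟩⟩⟩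
  have hμmem : (μ:ℝ) ∈ Set.Icc μ L := Set.mem_Icc.mpr ⟨le_rfl, hμL.le⟩
  have hLmem : (L:ℝ) ∈ Set.Icc μ L := Set.mem_Icc.mpr ⟨hμL.le, le_rfl⟩
  -- ===== Lower bound for all d of degree ≤ 1 =====
  have key_lower : ∀ d : Polynomial ℝ, d.degree ≤ 1 → ρ ≤ rate d := by
    intro d hd
    set a₁ := d.coeff 1 with ha₁
    set a₀ := d.coeff 0 with ha₀
    have hdrepr : d = C a₁ * X + C a₀ := eq_X_add_C_of_degree_le_one hd
    have hpoly : ∀ lam : ℝ, m - C lam * d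
        = X^2 - C (2*Real.cos θ + lam*a₁) * X + C (1 - lam*a₀) := by
      intro lam
      rw [hm]
      nth_rewrite 1 [hdrepr]
      simp only [map_add, map_mul, map_sub, map_one]
      ring
    set B := max 1 ((2*|Real.cos θ| + L*|a₁|) + (1 + L*|a₀|)) with hBdef
    have hB1 : (1:ℝ) ≤ B := le_max_left _ _
    have habsB : ∀ lam ∈ Set.Icc μ L, ∀ z ∈ (m - C lam * d).rootSet ℂ,
        ‖z‖ ≤ B := by
      intro lam hlam z hz
      rw [hpoly lam, mem_rootSet_quad_aux] at hz
      refine (crude_bound_aux hz).trans (max_le_max le_rfl (add_le_add ?_ ?_))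
      · have hlamabs : |lam| ≤ L := abs_le.mpr ⟨by linarith [hlam.1], hlam.2⟩
        calc |2*Real.cos θ + lam*a₁| ≤ |2*Real.cos θ| + |lam*a₁| := abs_add_le _ _
          _ ≤ 2*|Real.cos θ| + L*|a₁| := by
              rw [abs_mul, abs_mul, abs_two]
              exact add_le_add le_rfl
                (mul_le_mul_of_nonneg_right hlamabs (abs_nonneg _))
      · have hlamabs : |lam| ≤ L := abs_le.mpr ⟨by linarith [hlam.1], hlam.2⟩
        calc |1 - lam*a₀| ≤ |(1:ℝ)| + |lam*a₀| := abs_sub _ _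
          _ ≤ 1 + L*|a₀| := by
              rw [abs_one, abs_mul]
              exact add_le_add le_rfl
                (mul_le_mul_of_nonneg_right hlamabs (abs_nonneg _))
    have hfB : ∀ lam : Set.Icc μ L,
        sSup ((fun z : ℂ => ‖z‖) '' ((m - C (lam:ℝ) * d).rootSet ℂ)) ≤ B := by
      intro lam
      refine Real.sSup_le ?_ (by linarith)
      rintro x ⟨z, hz, rfl⟩
      exact habsB lam lam.2 z hz
    have hbdd : BddAbove (Set.range fun lam : Set.Icc μ L =>
        sSup ((fun z : ℂ => ‖z‖) '' ((m - C (lam:ℝ) * d).rootSet ℂ))) := by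
      refine ⟨B, ?_⟩
      rintro x ⟨lam, rfl⟩
      exact hfB lam
    have hlow : ∀ lam : ℝ, lam ∈ Set.Icc μ L →
        Real.sqrt |1 - lam*a₀| ≤ sSup ((fun z : ℂ => ‖z‖) '' ((m - C lam * d).rootSet ℂ)) := by
      intro lam hlam
      obtain ⟨z, w, hz, hw, hzw⟩ := exists_root_pair_aux (2*Real.cos θ + lam*a₁) (1 - lam*a₀)
      have habs : ‖z‖ * ‖w‖ = |1 - lam*a₀| := by
        rw [← norm_mul, hzw, Complex.norm_real, Real.norm_eq_abs]
      have hbddS : BddAbove ((fun z : ℂ => ‖z‖) '' ((m - C lam * d).rootSet ℂ)) := by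
        refine ⟨B, ?_⟩
        rintro x ⟨y, hy, rfl⟩
        exact habsB lam hlam y hy
      rcases le_total (‖z‖) (‖w‖) with hc | hc
      · refine le_trans ?_ (le_csSup hbddS ⟨w, ?_, rfl⟩)
        · have h2 : |1 - lam*a₀| ≤ (‖w‖)^2 := by
            nlinarith [norm_nonneg z, norm_nonneg w]
          calc Real.sqrt |1 - lam*a₀| ≤ Real.sqrt ((‖w‖)^2) := Real.sqrt_le_sqrt h2
            _ = ‖w‖ := Real.sqrt_sq (norm_nonneg w)
        · rw [hpoly lam, mem_rootSet_quad_aux]; exact hw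
      · refine le_trans ?_ (le_csSup hbddS ⟨z, ?_, rfl⟩)
        · have h2 : |1 - lam*a₀| ≤ (‖z‖)^2 := by
            nlinarith [norm_nonneg z, norm_nonneg w]
          calc Real.sqrt |1 - lam*a₀| ≤ Real.sqrt ((‖z‖)^2) := Real.sqrt_le_sqrt h2
            _ = ‖z‖ := Real.sqrt_sq (norm_nonneg z)
        · rw [hpoly lam, mem_rootSet_quad_aux]; exact hz
    have h1 : Real.sqrt |1 - μ*a₀| ≤ rate d := by
      rw [hrate d]
      exact le_trans (hlow μ hμmem) (le_ciSup hbdd ⟨μ, hμmem⟩)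
    have h2 : Real.sqrt |1 - L*a₀| ≤ rate d := by
      rw [hrate d]
      exact le_trans (hlow L hLmem) (le_ciSup hbdd ⟨L, hLmem⟩)
    have hr0 : 0 ≤ rate d := le_trans (Real.sqrt_nonneg _) h1
    have hv1 : |1 - μ*a₀| ≤ (rate d)^2 := by
      nlinarith [Real.sq_sqrt (abs_nonneg (1 - μ*a₀)), Real.sqrt_nonneg |1 - μ*a₀|]
    have hv2 : |1 - L*a₀| ≤ (rate d)^2 := by
      nlinarith [Real.sq_sqrt (abs_nonneg (1 - L*a₀)), Real.sqrt_nonneg |1 - L*a₀|]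
    have f1 : L*(1-μ*a₀) ≤ L*(rate d)^2 :=
      mul_le_mul_of_nonneg_left ((le_abs_self _).trans hv1) hL.le
    have f2 : μ*(-(1-L*a₀)) ≤ μ*(rate d)^2 :=
      mul_le_mul_of_nonneg_left ((neg_le_abs _).trans hv2) hμ.le
    have hdivle : (L - μ)/(L + μ) ≤ (rate d)^2 := by
      rw [div_le_iff₀ hLμ]
      nlinarith [f1, f2]
    calc ρ ≤ Real.sqrt ((rate d)^2) := Real.sqrt_le_sqrt hdivle
      _ = rate d := Real.sqrt_sq hr0
  -- ===== The optimal d₀ =====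
  set c₁ := -2 * Real.cos θ / L with hc₁
  set c₂ := -2 / (L + μ) with hc₂
  set d₀ : Polynomial ℝ := C c₁ * X - C c₂ with hd₀
  have hdeg₀ : d₀.degree ≤ 1 := by rw [hd₀]; compute_degree
  have hpoly₀ : ∀ lam : ℝ, m - C lam * d₀
      = X^2 - C (2*Real.cos θ + lam*c₁) * X + C (1 + lam*c₂) := by
    intro lam
    rw [hm, hd₀]
    simp only [map_add, map_mul, map_one]
    ring
  have hbval : ∀ lam : ℝ, 2*Real.cos θ + lam*c₁ = 2*Real.cos θ * ((L-lam)/L) := by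
    intro lam
    rw [hc₁]
    field_simp
    ring
  have hcval : ∀ lam : ℝ, 1 + lam*c₂ = (L + μ - 2*lam)/(L+μ) := by
    intro lam
    rw [hc₂]
    field_simp
    ring
  have hkey : |Real.cos θ| * (ρ*(L+μ)) ≤ L := by
    have hsq : (|Real.cos θ| * (ρ*(L+μ)))^2 ≤ L^2 := by
      rw [mul_pow, mul_pow, sq_abs, hρsq]
      have he : (L-μ)/(L+μ) * (L+μ)^2 = (L-μ)*(L+μ) := by field_simp
      rw [he]
      have hx : Real.cos θ^2 * ((L-μ)*(L+μ)) ≤ (L-μ)*(L+μ) := by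
        nlinarith [mul_pos (sub_pos.mpr hμL) hLμ]
      nlinarith [hx, mul_pos hμ hμ]
    nlinarith [mul_nonneg (abs_nonneg (Real.cos θ)) (mul_nonneg hρpos.le hLμ.le), hL]
  have hcond1 : ∀ lam ∈ Set.Icc μ L,
      |2*Real.cos θ + lam*c₁| * ρ ≤ ρ^2 + (1 + lam*c₂) := by
    intro lam hlam
    obtain ⟨hl1, hl2⟩ := Set.mem_Icc.mp hlam
    have hb_abs : |2*Real.cos θ + lam*c₁| = 2 * |Real.cos θ| * ((L-lam)/L) := by
      rw [hbval lam, abs_mul, abs_mul, abs_two,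
        abs_of_nonneg (div_nonneg (by linarith : (0:ℝ) ≤ L - lam) hL.le)]
    have hrhs : ρ^2 + (1 + lam*c₂) = 2*(L-lam)/(L+μ) := by
      rw [hρsq, hc₂]
      field_simp
      ring
    rw [hb_abs, hrhs]
    rw [show 2 * |Real.cos θ| * ((L-lam)/L) * ρ = (2 * |Real.cos θ| * (L-lam) * ρ)/L from by
      ring]
    rw [div_le_div_iff₀ hL hLμ]
    nlinarith [mul_nonneg (by linarith : (0:ℝ) ≤ L - lam)
      (sub_nonneg.mpr hkey), abs_nonneg (Real.cos θ)]
  have hcond2 : ∀ lam ∈ Set.Icc μ L, 1 + lam*c₂ ≤ ρ^2 := by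
    intro lam hlam
    obtain ⟨hl1, hl2⟩ := Set.mem_Icc.mp hlam
    rw [hcval lam, hρsq, div_le_div_iff₀ hLμ hLμ]
    nlinarith
  -- all roots bounded by ρ
  have fupper : ∀ lam : Set.Icc μ L,
      sSup ((fun z : ℂ => ‖z‖) '' ((m - C (lam:ℝ) * d₀).rootSet ℂ)) ≤ ρ := by
    intro lam
    refine Real.sSup_le ?_ hρpos.le
    rintro x ⟨z, hz, rfl⟩
    rw [hpoly₀, mem_rootSet_quad_aux] at hz
    exact root_bound_aux hz (hcond1 lam lam.2) (hcond2 lam lam.2) hρpos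
  -- at lam = μ the sup is exactly ρ
  have hdisc : (2*Real.cos θ + μ*c₁)^2 < 4*(1 + μ*c₂) := by
    rw [hbval μ, hcval μ]
    have l1 : (2*Real.cos θ*((L-μ)/L))^2 = (4*Real.cos θ^2*(L-μ)^2)/L^2 := by
      field_simp
      ring
    have l2 : (L + μ - 2*μ)/(L+μ) = (L-μ)/(L+μ) := by
      congr 1
      ring
    rw [l1, l2, show 4*((L-μ)/(L+μ)) = (4*(L-μ))/(L+μ) from by ring,
      div_lt_div_iff₀ (by positivity) hLμ]
    have h' : Real.cos θ^2*((L-μ)*(L+μ)) ≤ (L-μ)*(L+μ) := by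
      have := mul_le_mul_of_nonneg_right hcos2.le (mul_pos (sub_pos.mpr hμL) hLμ).le
      linarith
    nlinarith [h', mul_pos (sub_pos.mpr hμL) (mul_pos hμ hμ)]
  have hfμ : sSup ((fun z : ℂ => ‖z‖) '' ((m - C μ * d₀).rootSet ℂ)) = ρ := by
    obtain ⟨z, w, hz, hw, hzw⟩ := exists_root_pair_aux (2*Real.cos θ + μ*c₁) (1 + μ*c₂)
    have hcρ : 1 + μ*c₂ = ρ^2 := by
      rw [hρsq, hc₂]
      field_simp
      ring
    have hzρ : ‖z‖ = ρ := by
      have := root_exact_aux hz hdisc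
      rw [hcρ] at this
      nlinarith [norm_nonneg z, hρpos]
    have hmemz : ρ ∈ (fun z : ℂ => ‖z‖) '' ((m - C μ * d₀).rootSet ℂ) := by
      refine ⟨z, ?_, hzρ⟩
      rw [hpoly₀ μ, mem_rootSet_quad_aux]
      exact hz
    refine le_antisymm (fupper ⟨μ, hμmem⟩) (le_csSup ?_ hmemz)
    refine ⟨ρ, ?_⟩
    rintro x ⟨y, hy, rfl⟩
    rw [hpoly₀ μ, mem_rootSet_quad_aux] at hy
    exact root_bound_aux hy (hcond1 μ hμmem) (hcond2 μ hμmem) hρpos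
  have hrate₀ : rate d₀ = ρ := by
    rw [hrate d₀]
    refine le_antisymm (ciSup_le fupper) ?_
    have hbdd : BddAbove (Set.range fun lam : Set.Icc μ L =>
        sSup ((fun z : ℂ => ‖z‖) '' ((m - C (lam:ℝ) * d₀).rootSet ℂ))) := by
      refine ⟨ρ, ?_⟩
      rintro x ⟨lam, rfl⟩
      exact fupper lam
    calc ρ = sSup ((fun z : ℂ => ‖z‖) '' ((m - C ((⟨μ, hμmem⟩ : Set.Icc μ L):ℝ) * d₀).rootSet ℂ)) :=
          hfμ.symm
      _ ≤ _ := le_ciSup hbdd ⟨μ, hμmem⟩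
  refine ⟨⟨⟨d₀, hdeg₀, hrate₀⟩, ?_⟩, hrate₀⟩
  rintro x ⟨d, hd, rfl⟩
  exact key_lower d hd
end
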